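/- arXiv:2001.02527 — 6 statements merged into one kernel-verified Lean document; each statement's English description precedes it below -/
import Mathlib

section
/- Fix a state S ∈ 𝒮. The map (ΔT, I) ↦ η(ΔT, S, I), defined for ΔT ∈ {1,…,τ} and nonempty subsets I ⊆ {1,…,N}, is injective, and none of its values is the all-zero matrix O. Moreover, for every ΔT > τ and every nonempty I, η(ΔT, S, I) = O. -/
open Finset

/-- The `τ×τ` lower shift matrix `D`, with `D r c = 1` iff `r − c = 1`. -/
def shiftD (τ : ℕ) : Matrix (Fin τ) (Fin τ) ℤ :=
  Matrix.of fun r c => if (r : ℕ) = (c : ℕ) + 1 then 1 else 0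

/-- The `τ×N` indicator matrix `𝐈(I)`, with entry `1` iff the row is the first row and the
column belongs to `I`. -/
def indMat (τ N : ℕ) (I : Finset (Fin N)) : Matrix (Fin τ) (Fin N) ℤ :=
  Matrix.of fun r c => if (r : ℕ) = 0 ∧ c ∈ I then 1 else 0

/-- The state-update map `η(ΔT, S, I) = D^{ΔT−1}(D S + 𝐈(I))`. -/
def eta (τ N : ℕ) (ΔT : ℕ) (S : Matrix (Fin τ) (Fin N) ℤ) (I : Finset (Fin N)) :
    Matrix (Fin τ) (Fin N) ℤ :=
  shiftD τ ^ (ΔT - 1) * (shiftD τ * S + indMat τ N I)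

lemma shiftD_pow_apply (τ k : ℕ) (r c : Fin τ) :
    (shiftD τ ^ k) r c = if (r : ℕ) = (c : ℕ) + k then 1 else 0 := by
  induction k generalizing c with
  | zero => simp [Matrix.one_apply, Fin.ext_iff]
  | succ k ih =>
    rw [pow_succ, Matrix.mul_apply]
    by_cases h : (c : ℕ) + 1 < τ
    · rw [Finset.sum_eq_single (⟨(c:ℕ)+1, h⟩ : Fin τ)]
      · rw [ih]
        have h2 : shiftD τ (⟨(c:ℕ)+1, h⟩ : Fin τ) c = 1 := by simp [shiftD]
        rw [h2, mul_one]
        have h3 : ((⟨(c:ℕ)+1, h⟩ : Fin τ) : ℕ) + k = (c:ℕ) + (k+1) := by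
          simp only [Fin.val_mk]; omega
        rw [h3]
      · intro j _ hj
        have : (j:ℕ) ≠ (c:ℕ)+1 := fun hh => hj (Fin.ext hh)
        simp [shiftD, this]
      · simp
    · have hz : ∀ j : Fin τ, shiftD τ j c = 0 := by
        intro j
        have hjl := j.isLt
        have : (j:ℕ) ≠ (c:ℕ)+1 := by omega
        simp [shiftD, this]
      simp only [hz, mul_zero, Finset.sum_const_zero]
      rw [if_neg (by omega)]

lemma pow_mul_apply (τ N k : ℕ) (M : Matrix (Fin τ) (Fin N) ℤ) (r : Fin τ) (c : Fin N) :
    (shiftD τ ^ k * M) r c =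
      if h : k ≤ (r:ℕ) then M ⟨(r:ℕ) - k, by omega⟩ c else 0 := by
  rw [Matrix.mul_apply]
  split_ifs with h
  · rw [Finset.sum_eq_single (⟨(r:ℕ)-k, by omega⟩ : Fin τ)]
    · rw [shiftD_pow_apply, if_pos (by simp; omega), one_mul]
    · intro j _ hj
      rw [shiftD_pow_apply, if_neg, zero_mul]
      intro hh; exact hj (Fin.ext (by simp only [Fin.val_mk]; omega))
    · simp
  · apply Finset.sum_eq_zero; intro j _
    rw [shiftD_pow_apply, if_neg (by omega), zero_mul]

lemma eta_row_lt {τ N ΔT : ℕ} (S : Matrix (Fin τ) (Fin N) ℤ) (I : Finset (Fin N))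
    (r : Fin τ) (c : Fin N) (hr : (r:ℕ) < ΔT - 1) : eta τ N ΔT S I r c = 0 := by
  unfold eta
  rw [pow_mul_apply, dif_neg (by omega)]

lemma eta_row_eq {τ N ΔT : ℕ} (S : Matrix (Fin τ) (Fin N) ℤ) (I : Finset (Fin N))
    (r : Fin τ) (c : Fin N) (hr : (r:ℕ) = ΔT - 1) :
    eta τ N ΔT S I r c = if c ∈ I then 1 else 0 := by
  unfold eta
  rw [pow_mul_apply, dif_pos (by omega), Matrix.add_apply]
  rw [show shiftD τ * S = shiftD τ ^ 1 * S by rw [pow_one], pow_mul_apply]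
  rw [dif_neg (by simp; omega)]
  have hv : ((⟨(r:ℕ) - (ΔT - 1), by omega⟩ : Fin τ) : ℕ) = 0 := by
    simp only [Fin.val_mk]; omega
  have h0 : (r:ℕ) - (ΔT - 1) = 0 := by omega
  simp [indMat, hv, h0]

/-- **Injectivity and range of the state-update map.**  Fix a binary state `S`.  The map
`(ΔT, I) ↦ η(ΔT, S, I)` on `ΔT ∈ {1,…,τ}` and nonempty `I ⊆ {1,…,N}` is injective, never
takes the value `O` (the all-zero matrix), and for `ΔT > τ` it is identically `O`. -/
theorem stmt_2 (τ N : ℕ) (hτ : 1 ≤ τ) (hN : 1 ≤ N)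
    (S : Matrix (Fin τ) (Fin N) ℤ) (hS : ∀ r c, S r c = 0 ∨ S r c = 1) :
    (∀ ΔT₁ ΔT₂ : ℕ, 1 ≤ ΔT₁ → ΔT₁ ≤ τ → 1 ≤ ΔT₂ → ΔT₂ ≤ τ →
        ∀ I₁ I₂ : Finset (Fin N), I₁.Nonempty → I₂.Nonempty →
          eta τ N ΔT₁ S I₁ = eta τ N ΔT₂ S I₂ → ΔT₁ = ΔT₂ ∧ I₁ = I₂) ∧
      (∀ ΔT : ℕ, 1 ≤ ΔT → ΔT ≤ τ → ∀ I : Finset (Fin N), I.Nonempty →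
        eta τ N ΔT S I ≠ 0) ∧
      (∀ ΔT : ℕ, τ < ΔT → ∀ I : Finset (Fin N), I.Nonempty → eta τ N ΔT S I = 0) := by
  refine ⟨?_, ?_, ?_⟩
  · intro ΔT₁ ΔT₂ h11 h12 h21 h22 I₁ I₂ hI₁ hI₂ heq
    have hTT : ΔT₁ = ΔT₂ := by
      by_contra hne
      rcases Nat.lt_or_ge ΔT₁ ΔT₂ with hlt | hge
      · obtain ⟨c, hc⟩ := hI₁
        have e1 := eta_row_eq S I₁ (⟨ΔT₁ - 1, by omega⟩ : Fin τ) c rfl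
        have e2 := eta_row_lt (ΔT := ΔT₂) S I₂ (⟨ΔT₁ - 1, by omega⟩ : Fin τ) c (by simp only [Fin.val_mk]; omega)
        rw [heq, e2, if_pos hc] at e1
        exact one_ne_zero e1.symm
      · have hlt : ΔT₂ < ΔT₁ := by omega
        obtain ⟨c, hc⟩ := hI₂
        have e1 := eta_row_eq S I₂ (⟨ΔT₂ - 1, by omega⟩ : Fin τ) c rfl
        have e2 := eta_row_lt (ΔT := ΔT₁) S I₁ (⟨ΔT₂ - 1, by omega⟩ : Fin τ) c (by simp only [Fin.val_mk]; omega)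
        rw [← heq, e2, if_pos hc] at e1
        exact one_ne_zero e1.symm
    refine ⟨hTT, ?_⟩
    subst hTT
    ext c
    have e1 := eta_row_eq S I₁ (⟨ΔT₁ - 1, by omega⟩ : Fin τ) c rfl
    have e2 := eta_row_eq S I₂ (⟨ΔT₁ - 1, by omega⟩ : Fin τ) c rfl
    rw [heq, e2] at e1
    by_cases h1 : c ∈ I₁ <;> by_cases h2 : c ∈ I₂ <;> simp [h1, h2] at e1 ⊢
  · intro ΔT h1 h2 I hI hzero
    obtain ⟨c, hc⟩ := hI
    have e1 := eta_row_eq S I (⟨ΔT - 1, by omega⟩ : Fin τ) c rfl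
    rw [hzero, if_pos hc] at e1
    simp at e1
  · intro ΔT hT I hI
    ext r c
    unfold eta
    rw [pow_mul_apply, dif_neg (by omega)]
    rfl
end

section
/- Fix a state S ∈ 𝒮. The set { η(ΔT, S, I) : ΔT ∈ {1,…,τ}, I a nonempty subset of {1,…,N} } has cardinality exactly τ·(2^N − 1) and does not contain the all-zero matrix O. Consequently, from any state S there are exactly τ·(2^N − 1) distinct nonzero states reachable in one step of the state-update map. -/
open Finset

lemma shift_mul {τ N : ℕ} (M : Matrix (Fin τ) (Fin N) ℤ) (r : Fin τ) (c : Fin N) :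
    (shiftD τ * M) r c = if h : 1 ≤ (r : ℕ) then M ⟨(r : ℕ) - 1, by omega⟩ c else 0 := by
  rw [Matrix.mul_apply]
  simp only [shiftD, Matrix.of_apply]
  split_ifs with h
  · rw [Finset.sum_eq_single (⟨(r : ℕ) - 1, by omega⟩ : Fin τ)]
    · simp only [Fin.val_mk]
      rw [if_pos (by omega), one_mul]
    · intro j _ hj
      rw [if_neg, zero_mul]
      intro hc
      exact hj (by ext; simp; omega)
    · simp
  · apply Finset.sum_eq_zero
    intro j _
    rw [if_neg (by omega), zero_mul]

lemma shift_pow_mul {τ N : ℕ} (k : ℕ) (M : Matrix (Fin τ) (Fin N) ℤ) (r : Fin τ) (c : Fin N) :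
    (shiftD τ ^ k * M) r c = if h : k ≤ (r : ℕ) then M ⟨(r : ℕ) - k, by omega⟩ c else 0 := by
  induction k generalizing r with
  | zero => simp
  | succ k ih =>
    rw [pow_succ', Matrix.mul_assoc, shift_mul]
    split_ifs with h1 h2
    · rw [ih]
      split_ifs with h3
      · congr 1; ext; simp; omega
      · simp at h3; omega
    · rw [ih, dif_neg (by simp; omega)]
    · omega
    · rfl

lemma eta_entry {τ N : ℕ} (ΔT : ℕ) (hΔ : 1 ≤ ΔT) (S : Matrix (Fin τ) (Fin N) ℤ)
    (I : Finset (Fin N)) (r : Fin τ) (c : Fin N) :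
    eta τ N ΔT S I r c =
      if (r : ℕ) + 1 < ΔT then 0
      else if h : (r : ℕ) + 1 = ΔT then (if c ∈ I then 1 else 0)
      else S ⟨(r : ℕ) - ΔT, by omega⟩ c := by
  rw [eta, shift_pow_mul]
  by_cases h1 : ΔT - 1 ≤ (r : ℕ)
  · rw [dif_pos h1, Matrix.add_apply, shift_mul]
    by_cases h2 : (r : ℕ) + 1 = ΔT
    · rw [if_neg (by omega), dif_pos h2, dif_neg (by simp; omega)]
      simp only [indMat, Matrix.of_apply, Fin.val_mk]
      have hz : (r : ℕ) - (ΔT - 1) = 0 := by omega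
      simp [hz]
    · rw [if_neg (by omega), dif_neg h2, dif_pos (by simp; omega)]
      simp only [indMat, Matrix.of_apply, Fin.val_mk]
      rw [if_neg (by rintro ⟨ha, _⟩; omega), add_zero]
      congr 1; ext; simp; omega
  · rw [dif_neg h1, if_pos (by omega)]

/-- **Number of states reachable in one step.**  Fix a binary state `S`.  The set
`{ η(ΔT, S, I) : ΔT ∈ {1,…,τ}, I nonempty }` has exactly `τ·(2^N − 1)` elements and does
not contain the all-zero matrix `O`. -/
theorem stmt_3 (τ N : ℕ) (hτ : 1 ≤ τ) (hN : 1 ≤ N)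
    (S : Matrix (Fin τ) (Fin N) ℤ) (hS : ∀ r c, S r c = 0 ∨ S r c = 1) :
    ((Finset.Icc 1 τ ×ˢ Finset.univ.filter fun I : Finset (Fin N) => I.Nonempty).image
        (fun q : ℕ × Finset (Fin N) => eta τ N q.1 S q.2)).card = τ * (2 ^ N - 1) ∧
      (0 : Matrix (Fin τ) (Fin N) ℤ) ∉
        ((Finset.Icc 1 τ ×ˢ Finset.univ.filter fun I : Finset (Fin N) => I.Nonempty).image
          (fun q : ℕ × Finset (Fin N) => eta τ N q.1 S q.2)) := by
  have key1 : ∀ ΔT (I : Finset (Fin N)), 1 ≤ ΔT → ∀ r : Fin τ, (r : ℕ) + 1 = ΔT → ∀ c,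
      eta τ N ΔT S I r c = if c ∈ I then 1 else 0 := by
    intro ΔT I h1 r hr c
    rw [eta_entry ΔT h1, if_neg (by omega), dif_pos hr]
  have key2 : ∀ ΔT (I : Finset (Fin N)), 1 ≤ ΔT → ∀ (r : Fin τ), (r : ℕ) + 1 < ΔT → ∀ c,
      eta τ N ΔT S I r c = 0 := by
    intro ΔT I h1 r hr c
    rw [eta_entry ΔT h1, if_pos hr]
  have hinj : Set.InjOn (fun q : ℕ × Finset (Fin N) => eta τ N q.1 S q.2)
      ((Finset.Icc 1 τ ×ˢ Finset.univ.filter fun I : Finset (Fin N) => I.Nonempty) :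
        Finset (ℕ × Finset (Fin N))) := by
    rintro ⟨a, I⟩ ha ⟨b, J⟩ hb heq
    simp only [Finset.coe_product, Set.mem_prod, Finset.mem_coe, Finset.mem_Icc,
      Finset.coe_filter, Set.mem_setOf_eq, Finset.mem_univ, true_and] at ha hb
    obtain ⟨⟨ha1, ha2⟩, hI⟩ := ha
    obtain ⟨⟨hb1, hb2⟩, hJ⟩ := hb
    simp only at heq
    have hab : a = b := by
      by_contra hne
      rcases Nat.lt_or_ge a b with hlt | hge
      · obtain ⟨c, hc⟩ := hI
        have e1 := key1 a I ha1 ⟨a - 1, by omega⟩ (by simp; omega) c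
        have e2 := key2 b J hb1 ⟨a - 1, by omega⟩ (by simp; omega) c
        rw [heq] at e1
        rw [e2, if_pos hc] at e1
        exact one_ne_zero e1.symm
      · have hlt : b < a := by omega
        obtain ⟨c, hc⟩ := hJ
        have e1 := key1 b J hb1 ⟨b - 1, by omega⟩ (by simp; omega) c
        have e2 := key2 a I ha1 ⟨b - 1, by omega⟩ (by simp; omega) c
        rw [← heq] at e1
        rw [e2, if_pos hc] at e1
        exact one_ne_zero e1.symm
    subst hab
    have hIJ : I = J := by
      ext c
      have e1 := key1 a I ha1 ⟨a - 1, by omega⟩ (by simp; omega) c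
      have e2 := key1 a J hb1 ⟨a - 1, by omega⟩ (by simp; omega) c
      rw [heq, e2] at e1
      by_cases h : c ∈ I <;> by_cases h' : c ∈ J <;> simp_all
    simp [hIJ]
  have hfcard : (Finset.univ.filter fun I : Finset (Fin N) => I.Nonempty).card = 2 ^ N - 1 := by
    have he : Finset.univ.filter (fun I : Finset (Fin N) => I.Nonempty)
        = Finset.univ \ {∅} := by
      ext I
      simp [Finset.nonempty_iff_ne_empty]
    rw [he, Finset.card_sdiff_of_subset (by simp), Finset.card_singleton, Finset.card_univ]
    simp
  constructor
  · rw [Finset.card_image_of_injOn hinj, Finset.card_product, Nat.card_Icc, hfcard]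
    have : τ + 1 - 1 = τ := by omega
    rw [this]
  · intro h
    obtain ⟨⟨a, I⟩, hmem, heq⟩ := Finset.mem_image.mp h
    simp only [Finset.mem_product, Finset.mem_Icc, Finset.mem_filter, Finset.mem_univ,
      true_and] at hmem
    obtain ⟨⟨ha1, ha2⟩, hI⟩ := hmem
    obtain ⟨c, hc⟩ := hI
    have e1 := key1 a I ha1 ⟨a - 1, by omega⟩ (by simp; omega) c
    rw [heq] at e1
    simp [hc] at e1
end

section
/- Under the finite-horizon discrete-time τ-memory N-dimensional Hawkes probability mass function ℙ on ({0,1}^N)^T, let t ∈ {1,…,T} and ΔT ≥ 1 with t + ΔT ≤ T, and let H ∈ ({0,1}^N)^t be a history with ℙ[X(1:t) = H] > 0 such that H has an event at time t, with spiking set I = {i : H_i(t) = 1} ≠ ∅ and pre-event state S ∈ {0,1}^{τ×N} given by S_{r,c} = H_c(t − r) for 1 ≤ r ≤ τ (with H_c(u) = 0 for u ≤ 0). Then the conditional probability, given X(1:t) = H, that the smallest u > t with X(u) ≠ 0 equals t + ΔT is ( ∏_{i=1}^{N} ∏_{j=1}^{ΔT−1} (1 − σ(Λ^{(i)}(η(j,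 S, I)))) ) · ( 1 − ∏_{i=1}^{N} (1 − σ(Λ^{(i)}(η(ΔT, S, I)))) ), where Λ^{(i)}(S') = λ_i + Σ_{j=1}^{N} Σ_{r=1}^{τ} S'_{r,j} ν_{i,j}(r) is the intensity determined by a state S' ∈ {0,1}^{τ×N}. -/
open Finset

/-- The sigmoid function `σ(a) = 1/(1 + e^{−a})`. -/
noncomputable def sigm (a : ℝ) : ℝ := (1 + Real.exp (-a))⁻¹

/-- The intensity `λ^{(i)}(t|X) = λ_i + Σ_j Σ_{t' < t, X_j(t') = 1} ν_{i,j}(t − t')` of trace `i`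
at time `t` given the history encoded in the binary array `X` (times indexed by `Fin T`,
index `t` standing for time `t+1`; only values of `X` at times `t' < t` are used). -/
noncomputable def intensity (N T : ℕ) (lam : Fin N → ℝ) (ν : Fin N → Fin N → ℤ → ℝ)
    (t : Fin T) (X : Fin T → Fin N → Bool) (i : Fin N) : ℝ :=
  lam i + ∑ j : Fin N,
    ∑ t' ∈ Finset.univ.filter (fun t' : Fin T => t' < t ∧ X t' j = true),
      ν i j ((t : ℤ) - (t' : ℤ))

/-- The finite-horizon discrete-time `τ`-memory `N`-dimensional Hawkes probability mass function
on `({0,1}^N)^T`. -/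
noncomputable def hawkesP (N T : ℕ) (lam : Fin N → ℝ) (ν : Fin N → Fin N → ℤ → ℝ)
    (X : Fin T → Fin N → Bool) : ℝ :=
  ∏ t : Fin T, ∏ i : Fin N,
    if X t i = true then sigm (intensity N T lam ν t X i)
    else 1 - sigm (intensity N T lam ν t X i)

/-- The intensity `Λ^{(i)}(S') = λ_i + Σ_j Σ_{r=1}^{τ} S'_{r,j} ν_{i,j}(r)` determined by a state
`S' ∈ {0,1}^{τ×N}` (rows indexed by `Fin τ`, index `r` standing for lag `r+1`). -/
noncomputable def stateIntensity (τ N : ℕ) (lam : Fin N → ℝ) (ν : Fin N → Fin N → ℤ → ℝ)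
    (S' : Matrix (Fin τ) (Fin N) ℤ) (i : Fin N) : ℝ :=
  lam i + ∑ j : Fin N, ∑ r : Fin τ, (S' r j : ℝ) * ν i j ((r : ℤ) + 1)

noncomputable def fac (N T : ℕ) (lam : Fin N → ℝ) (ν : Fin N → Fin N → ℤ → ℝ)
    (X : Fin T → Fin N → Bool) (u : Fin T) : ℝ :=
  ∏ i : Fin N, if X u i = true then sigm (intensity N T lam ν u X i)
    else 1 - sigm (intensity N T lam ν u X i)

lemma hawkesP_eq_prod_fac (N T : ℕ) (lam : Fin N → ℝ) (ν : Fin N → Fin N → ℤ → ℝ)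
    (X : Fin T → Fin N → Bool) :
    hawkesP N T lam ν X = ∏ u : Fin T, fac N T lam ν X u := rfl

lemma intensity_congr (N T : ℕ) (lam : Fin N → ℝ) (ν : Fin N → Fin N → ℤ → ℝ)
    (u : Fin T) (X Y : Fin T → Fin N → Bool) (h : ∀ t' : Fin T, t' < u → X t' = Y t')
    (i : Fin N) : intensity N T lam ν u X i = intensity N T lam ν u Y i := by
  unfold intensity
  congr 1
  refine Finset.sum_congr rfl fun j _ => ?_
  refine Finset.sum_congr ?_ fun t' _ => rfl
  refine Finset.filter_congr fun t' _ => ?_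
  constructor <;> rintro ⟨h1, h2⟩ <;> exact ⟨h1, by rw [h t' h1] at * ; exact h2⟩

lemma fac_congr (N T : ℕ) (lam : Fin N → ℝ) (ν : Fin N → Fin N → ℤ → ℝ)
    (u : Fin T) (X Y : Fin T → Fin N → Bool) (h : ∀ t' : Fin T, t' ≤ u → X t' = Y t') :
    fac N T lam ν X u = fac N T lam ν Y u := by
  unfold fac
  refine Finset.prod_congr rfl fun i _ => ?_
  rw [h u le_rfl, intensity_congr N T lam ν u X Y (fun t' ht' => h t' ht'.le) i]

lemma sum_bool_prod (N : ℕ) (p q : Fin N → ℝ) :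
    ∑ v : Fin N → Bool, ∏ i : Fin N, (if v i = true then p i else q i)
      = ∏ i : Fin N, (p i + q i) := by
  have := Fintype.prod_sum (fun (i : Fin N) (b : Bool) => if b = true then p i else q i)
  simp only [Fintype.sum_bool] at this
  rw [← this]
  simp

open Classical in
lemma tail_sum (N T : ℕ) (lam : Fin N → ℝ) (ν : Fin N → Fin N → ℤ → ℝ) :
    ∀ (k : ℕ) (Y : Fin T → Fin N → Bool),
    ∑ X ∈ Finset.univ.filter
        (fun X : Fin T → Fin N → Bool => ∀ u : Fin T, (u : ℕ) < T - k → X u = Y u),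
      hawkesP N T lam ν X
    = ∏ u ∈ Finset.univ.filter (fun u : Fin T => (u : ℕ) < T - k), fac N T lam ν Y u := by
  intro k
  induction k with
  | zero =>
    intro Y
    have hset : Finset.univ.filter
        (fun X : Fin T → Fin N → Bool => ∀ u : Fin T, (u : ℕ) < T - 0 → X u = Y u) = {Y} := by
      ext X
      simp only [mem_filter, mem_univ, true_and, mem_singleton]
      constructor
      · intro h; funext u; exact h u (by omega)
      · rintro rfl; intro u _; rfl
    have hset2 : Finset.univ.filter (fun u : Fin T => (u : ℕ) < T - 0) = Finset.univ := by
      ext u; simp only [mem_filter, mem_univ, true_and, iff_true]; omega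
    rw [hset, hset2, Finset.sum_singleton, hawkesP_eq_prod_fac]
  | succ k ih =>
    intro Y
    by_cases hk : T - (k+1) = T - k
    · rw [hk]; exact ih Y
    have hm : T - (k+1) < T := by omega
    set m : ℕ := T - (k+1) with hmdef
    have hm1 : m + 1 = T - k := by omega
    set um : Fin T := ⟨m, hm⟩ with humdef
    have humval : (um : ℕ) = m := rfl
    -- fiber over the value at time m
    rw [← Finset.sum_fiberwise _ (fun X : Fin T → Fin N → Bool => X um)
      (hawkesP N T lam ν)]
    have hfib : ∀ v : Fin N → Bool,
        (Finset.univ.filter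
          (fun X : Fin T → Fin N → Bool => ∀ u : Fin T, (u : ℕ) < m → X u = Y u)).filter
          (fun X => X um = v)
        = Finset.univ.filter (fun X : Fin T → Fin N → Bool =>
            ∀ u : Fin T, (u : ℕ) < T - k → X u = Function.update Y um v u) := by
      intro v
      ext X
      simp only [mem_filter, mem_univ, true_and]
      constructor
      · rintro ⟨h1, h2⟩ u hu
        rcases Nat.lt_or_ge (u : ℕ) m with hlt | hge
        · rw [Function.update_of_ne (by intro he; rw [he] at hlt; exact absurd hlt (by rw [humval]; omega)),
            h1 u hlt]
        · have : u = um := Fin.ext (by omega)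
          rw [this, Function.update_self]; exact this ▸ h2
      · intro h
        constructor
        · intro u hu
          have hne : u ≠ um := by intro he; rw [he] at hu; omega
          rw [h u (by omega), Function.update_of_ne hne]
        · rw [h um (by omega), Function.update_self]
    calc ∑ v : Fin N → Bool, ∑ X ∈ (Finset.univ.filter
          (fun X : Fin T → Fin N → Bool => ∀ u : Fin T, (u : ℕ) < m → X u = Y u)).filter
          (fun X => X um = v), hawkesP N T lam ν X
        = ∑ v : Fin N → Bool, ∏ u ∈ Finset.univ.filter (fun u : Fin T => (u : ℕ) < T - k),
            fac N T lam ν (Function.update Y um v) u := by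
          refine Finset.sum_congr rfl fun v _ => ?_
          rw [hfib v]
          exact ih (Function.update Y um v)
      _ = ∏ u ∈ Finset.univ.filter (fun u : Fin T => (u : ℕ) < m), fac N T lam ν Y u := by
          have hins : Finset.univ.filter (fun u : Fin T => (u : ℕ) < T - k)
              = insert um (Finset.univ.filter (fun u : Fin T => (u : ℕ) < m)) := by
            ext u
            simp only [mem_filter, mem_univ, true_and, mem_insert]
            constructor
            · intro hu
              rcases Nat.lt_or_ge (u:ℕ) m with h | h
              · right; exact h
              · left; exact Fin.ext (by omega)
            · rintro (rfl | hu)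
              · omega
              · omega
          have hnotmem : um ∉ Finset.univ.filter (fun u : Fin T => (u : ℕ) < m) := by
            intro hmem
            simp only [mem_filter, mem_univ, true_and] at hmem
            omega
          have hfacY : ∀ v (u : Fin T), (u:ℕ) < m →
              fac N T lam ν (Function.update Y um v) u = fac N T lam ν Y u := by
            intro v u hu
            refine fac_congr N T lam ν u _ _ fun t' ht' => ?_
            refine Function.update_of_ne ?_ _ _
            intro he
            have : (t' : ℕ) ≤ (u : ℕ) := ht'
            rw [he] at this; omega
          simp only [hins]
          rw [Finset.sum_congr rfl (fun v _ => Finset.prod_insert hnotmem)]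
          have hfacm : ∀ v, fac N T lam ν (Function.update Y um v) um
              = ∏ i : Fin N, (if v i = true then sigm (intensity N T lam ν um Y i)
                  else 1 - sigm (intensity N T lam ν um Y i)) := by
            intro v
            unfold fac
            refine Finset.prod_congr rfl fun i _ => ?_
            rw [Function.update_self,
              intensity_congr N T lam ν um (Function.update Y um v) Y
                (fun t' ht' => Function.update_of_ne
                  (by intro he; rw [he] at ht'; exact absurd ht' (lt_irrefl _)) _ _) i]
          calc ∑ v : Fin N → Bool, fac N T lam ν (Function.update Y um v) um *
                ∏ u ∈ Finset.univ.filter (fun u : Fin T => (u : ℕ) < m),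
                  fac N T lam ν (Function.update Y um v) u
              = ∑ v : Fin N → Bool,
                  (∏ i : Fin N, (if v i = true then sigm (intensity N T lam ν um Y i)
                    else 1 - sigm (intensity N T lam ν um Y i))) *
                  ∏ u ∈ Finset.univ.filter (fun u : Fin T => (u : ℕ) < m),
                    fac N T lam ν Y u := by
                refine Finset.sum_congr rfl fun v _ => ?_
                rw [hfacm v, Finset.prod_congr rfl (fun u hu => hfacY v u (by
                  simp only [mem_filter, mem_univ, true_and] at hu; exact hu))]
            _ = ∏ u ∈ Finset.univ.filter (fun u : Fin T => (u : ℕ) < m), fac N T lam ν Y u := by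
                rw [← Finset.sum_mul, sum_bool_prod]
                have : ∀ i : Fin N, sigm (intensity N T lam ν um Y i) +
                    (1 - sigm (intensity N T lam ν um Y i)) = 1 := fun i => by ring
                rw [Finset.prod_congr rfl fun i _ => this i, Finset.prod_const_one, one_mul]

lemma shiftD_mul_apply (τ N : ℕ) (M : Matrix (Fin τ) (Fin N) ℤ) (r : Fin τ) (c : Fin N) :
    (shiftD τ * M) r c = if h : 1 ≤ (r : ℕ) then M ⟨(r : ℕ) - 1, by omega⟩ c else 0 := by
  rw [Matrix.mul_apply]
  split
  · next h =>
    rw [Finset.sum_eq_single (⟨(r : ℕ) - 1, by omega⟩ : Fin τ)]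
    · simp only [shiftD, Matrix.of_apply]
      rw [if_pos (show (r:ℕ) = (r:ℕ) - 1 + 1 by omega), one_mul]
    · intro b _ hb
      simp only [shiftD, Matrix.of_apply]
      rw [if_neg, zero_mul]
      intro he
      have : (b : ℕ) = (r:ℕ) - 1 := by omega
      exact hb (Fin.ext this)
    · intro h'; exact absurd (Finset.mem_univ _) h'
  · next h =>
    refine Finset.sum_eq_zero fun b _ => ?_
    simp only [shiftD, Matrix.of_apply]
    rw [if_neg (by omega), zero_mul]

lemma shiftD_pow_mul_apply (τ N : ℕ) (m : ℕ) (M : Matrix (Fin τ) (Fin N) ℤ)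
    (r : Fin τ) (c : Fin N) :
    (shiftD τ ^ m * M) r c = if h : m ≤ (r : ℕ) then M ⟨(r : ℕ) - m, by omega⟩ c else 0 := by
  induction m generalizing r with
  | zero => simp
  | succ m ih =>
    rw [pow_succ', Matrix.mul_assoc, shiftD_mul_apply]
    split
    · next h =>
      rw [ih]
      split
      · next h2 =>
        rw [dif_pos (by simp at h2 ⊢; omega)]
        congr 1
        exact Fin.ext (by simp; omega)
      · next h2 =>
        rw [dif_neg (by simp at h2 ⊢; omega)]
    · next h =>
      rw [dif_neg (by omega)]

lemma eta_apply (τ N : ℕ) (k : ℕ) (hk : 1 ≤ k) (S : Matrix (Fin τ) (Fin N) ℤ)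
    (I : Finset (Fin N)) (r : Fin τ) (c : Fin N) :
    eta τ N k S I r c =
      if (r : ℕ) = k - 1 then (if c ∈ I then 1 else 0)
      else if h : k ≤ (r : ℕ) then S ⟨(r : ℕ) - k, by omega⟩ c else 0 := by
  unfold eta
  rw [shiftD_pow_mul_apply]
  split
  · next h =>
    rw [Matrix.add_apply, shiftD_mul_apply]
    simp only [indMat, Matrix.of_apply, Fin.val_mk]
    by_cases hr : (r : ℕ) = k - 1
    · rw [if_pos hr, dif_neg (show ¬ 1 ≤ (r:ℕ) - (k-1) by omega), zero_add]
      by_cases hc : c ∈ I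
      · rw [if_pos (⟨show (r:ℕ) - (k-1) = 0 by omega, hc⟩ :
          ((r:ℕ) - (k-1) = 0 ∧ c ∈ I)), if_pos hc]
      · rw [if_neg (fun hx => hc hx.2), if_neg hc]
    · rw [if_neg hr, dif_pos (by omega), if_neg (by omega), add_zero, dif_pos (by omega)]
      congr 1
      exact Fin.ext (by simp; omega)
  · next h =>
    rw [if_neg (by omega), dif_neg (by omega)]

set_option maxHeartbeats 3000000 in
open Classical in
lemma intensity_eq_state (τ N T : ℕ) (lam : Fin N → ℝ) (ν : Fin N → Fin N → ℤ → ℝ)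
    (hν : ∀ i j s, (s < 1 ∨ (τ : ℤ) < s) → ν i j s = 0)
    (t k : ℕ) (ht : 1 ≤ t) (hk : 1 ≤ k) (hkT : t + k ≤ T)
    (H : Fin T → Fin N → Bool) (I : Finset (Fin N))
    (hIdef : ∀ i : Fin N, i ∈ I ↔ H ⟨t - 1, by omega⟩ i = true)
    (S : Matrix (Fin τ) (Fin N) ℤ)
    (hS : ∀ (r : Fin τ) (c : Fin N), S r c =
      if h : (r : ℕ) + 2 ≤ t then (if H ⟨t - (r : ℕ) - 2, by omega⟩ c = true then 1 else 0)
      else 0)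
    (i : Fin N) :
    intensity N T lam ν ⟨t + k - 1, by omega⟩
      (fun u => if (u : ℕ) < t then H u else fun _ => false) i
      = stateIntensity τ N lam ν (eta τ N k S I) i := by
  unfold intensity stateIntensity
  congr 1
  refine Finset.sum_congr rfl fun j _ => ?_
  set u : Fin T := ⟨t + k - 1, by omega⟩ with hu
  have huval : (u : ℕ) = t + k - 1 := rfl
  set C : Fin τ → Prop := fun r =>
    ((r : ℕ) = k - 1 ∧ j ∈ I) ∨
    (k ≤ (r : ℕ) ∧ (r : ℕ) - k + 2 ≤ t ∧ H ⟨t - ((r : ℕ) - k) - 2, by omega⟩ j = true)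
    with hC
  -- RHS as a filtered sum
  have hRHS : ∑ r : Fin τ, ((eta τ N k S I) r j : ℝ) * ν i j ((r : ℤ) + 1)
      = ∑ r ∈ Finset.univ.filter C, ν i j ((r : ℤ) + 1) := by
    rw [Finset.sum_filter]
    refine Finset.sum_congr rfl fun r _ => ?_
    rw [eta_apply τ N k hk S I r j]
    by_cases h1 : (r : ℕ) = k - 1
    · rw [if_pos h1]
      by_cases h2 : j ∈ I
      · rw [if_pos h2, if_pos (show C r from Or.inl ⟨h1, h2⟩)]; norm_num
      · rw [if_neg h2, if_neg (show ¬ C r by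
          rintro (⟨_, hj⟩ | ⟨hkr, _⟩)
          · exact h2 hj
          · omega)]
        norm_num
    · rw [if_neg h1]
      by_cases h2 : k ≤ (r : ℕ)
      · rw [dif_pos h2, hS]
        by_cases h3 : (r : ℕ) - k + 2 ≤ t
        · rw [dif_pos (show ((⟨(r:ℕ)-k, by omega⟩ : Fin τ) : ℕ) + 2 ≤ t from h3)]
          by_cases h4 : H ⟨t - ((r : ℕ) - k) - 2, by omega⟩ j = true
          · rw [if_pos h4, if_pos (show C r from Or.inr ⟨h2, h3, h4⟩)]; norm_num
          · rw [if_neg h4, if_neg (show ¬ C r by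
              rintro (⟨hr1, _⟩ | ⟨_, _, hr3⟩)
              · omega
              · exact h4 hr3)]
            norm_num
        · rw [dif_neg (show ¬ (((⟨(r:ℕ)-k, by omega⟩ : Fin τ) : ℕ) + 2 ≤ t) from h3),
            if_neg (show ¬ C r by
              rintro (⟨hr1, _⟩ | ⟨_, hr2, _⟩)
              · omega
              · omega)]
          norm_num
      · rw [dif_neg h2, if_neg (show ¬ C r by
          rintro (⟨hr1, _⟩ | ⟨hr2, _⟩)
          · omega
          · omega)]
        norm_num
  rw [hRHS]
  -- LHS filter simplification
  have hF1 : Finset.univ.filter (fun t' : Fin T => t' < u ∧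
        (if (t' : ℕ) < t then H t' else fun _ => false) j = true)
      = Finset.univ.filter (fun t' : Fin T => (t' : ℕ) < t ∧ H t' j = true) := by
    refine Finset.filter_congr fun t' _ => ?_
    by_cases hlt : (t' : ℕ) < t
    · simp only [if_pos hlt]
      constructor
      · rintro ⟨_, h2⟩; exact ⟨hlt, h2⟩
      · rintro ⟨_, h2⟩; exact ⟨by rw [Fin.lt_def]; omega, h2⟩
    · simp only [if_neg hlt]
      constructor
      · rintro ⟨_, h2⟩; exact absurd h2 (by simp)
      · rintro ⟨h1, _⟩; exact absurd h1 hlt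
  rw [hF1]
  -- restrict to memory window
  have hsub : Finset.univ.filter (fun t' : Fin T =>
        (t' : ℕ) < t ∧ H t' j = true ∧ t + k - 1 ≤ (t' : ℕ) + τ)
      ⊆ Finset.univ.filter (fun t' : Fin T => (t' : ℕ) < t ∧ H t' j = true) := by
    intro x hx
    simp only [mem_filter, mem_univ, true_and] at hx ⊢
    exact ⟨hx.1, hx.2.1⟩
  rw [← Finset.sum_subset hsub (by
    intro x hx hnx
    simp only [mem_filter, mem_univ, true_and] at hx hnx
    refine hν i j _ (Or.inr ?_)
    have hx3 : ¬ (t + k - 1 ≤ (x : ℕ) + τ) := fun hc => hnx ⟨hx.1, hx.2, hc⟩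
    have := hx.1
    rw [huval] at *
    push_cast
    omega)]
  -- bijection
  refine Finset.sum_bij' (fun t' ht' => (⟨t + k - 2 - (t' : ℕ), by
      simp only [mem_filter, mem_univ, true_and] at ht'; omega⟩ : Fin τ))
    (fun r hr => (⟨t + k - 2 - (r : ℕ), by omega⟩ : Fin T)) ?_ ?_ ?_ ?_ ?_
  · -- maps to filter C
    intro t' ht'
    simp only [mem_filter, mem_univ, true_and] at ht' ⊢
    obtain ⟨h1, h2, h3⟩ := ht'
    by_cases ht2 : (t' : ℕ) = t - 1
    · refine Or.inl ⟨by first | omega | (simp only [Fin.val_mk]; omega), (hIdef j).mpr ?_⟩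
      have : t' = (⟨t - 1, by omega⟩ : Fin T) := Fin.ext (by first | omega | (simp only [Fin.val_mk]; omega))
      rw [← this]; exact h2
    · refine Or.inr ⟨by first | omega | (simp only [Fin.val_mk]; omega), by first | omega | (simp only [Fin.val_mk]; omega), ?_⟩
      have : (⟨t - ((((⟨t + k - 2 - (t' : ℕ), by omega⟩ : Fin τ)) : ℕ) - k) - 2, by omega⟩ : Fin T)
          = t' := Fin.ext (by first | omega | (simp only [Fin.val_mk]; omega))
      rw [this]; exact h2
  · -- maps back
    intro r hr
    simp only [mem_filter, mem_univ, true_and] at hr ⊢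
    rcases hr with ⟨h1, h2⟩ | ⟨h1, h2, h3⟩
    · have hkτ : k ≤ τ := by have := r.isLt; omega
      refine ⟨by first | omega | (simp only [Fin.val_mk]; omega), ?_, by first | omega | (simp only [Fin.val_mk]; omega)⟩
      have : (⟨t + k - 2 - (r : ℕ), by omega⟩ : Fin T) = (⟨t - 1, by omega⟩ : Fin T) :=
        Fin.ext (by first | omega | (simp only [Fin.val_mk]; omega))
      rw [this]; exact (hIdef j).mp h2
    · have := r.isLt
      refine ⟨by first | omega | (simp only [Fin.val_mk]; omega), ?_, by first | omega | (simp only [Fin.val_mk]; omega)⟩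
      have : (⟨t + k - 2 - (r : ℕ), by omega⟩ : Fin T)
          = (⟨t - ((r : ℕ) - k) - 2, by omega⟩ : Fin T) :=
        Fin.ext (by first | omega | (simp only [Fin.val_mk]; omega))
      rw [this]; exact h3
  · -- left inverse
    intro t' ht'
    simp only [mem_filter, mem_univ, true_and] at ht'
    exact Fin.ext (by first | omega | (simp only [Fin.val_mk]; omega))
  · -- right inverse
    intro r hr
    simp only [mem_filter, mem_univ, true_and, hC] at hr
    have := r.isLt
    exact Fin.ext (by
      simp only [Fin.val_mk]
      rcases hr with ⟨h1, _⟩ | ⟨h1, h2, _⟩ <;> omega)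
  · -- values
    intro t' ht'
    simp only [mem_filter, mem_univ, true_and] at ht'
    congr 1
    simp only [Fin.val_mk, huval]
    push_cast
    omega

set_option maxHeartbeats 2000000 in
open Classical in
/-- **Conditional inter-arrival distribution of the Hawkes process** (equation (16) of the
paper).  Times `1,…,T` are indexed by `Fin T` (index `u` standing for time `u+1`).  Given a
history `H` over times `1,…,t` of positive probability, with spiking set `I ≠ ∅` at time `t`
and pre-event state `S` (`S r c = H_c(t − r)` for `1 ≤ r ≤ τ`, zero for `t − r ≤ 0`), the
conditional probability that the first arrival after time `t` occurs at time `t + ΔT` is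
`(∏_i ∏_{j=1}^{ΔT−1} (1 − σ(Λ^{(i)}(η(j,S,I))))) · (1 − ∏_i (1 − σ(Λ^{(i)}(η(ΔT,S,I)))))`. -/
theorem stmt_5 (τ N T : ℕ) (hτ : 1 ≤ τ) (hN : 1 ≤ N) (hT : 1 ≤ T)
    (lam : Fin N → ℝ) (hlam : ∀ i, 0 < lam i)
    (ν : Fin N → Fin N → ℤ → ℝ) (hν : ∀ i j t, (t < 1 ∨ (τ : ℤ) < t) → ν i j t = 0)
    (t ΔT : ℕ) (ht : 1 ≤ t) (hΔT : 1 ≤ ΔT) (htT : t + ΔT ≤ T)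
    (H : Fin T → Fin N → Bool)
    (I : Finset (Fin N)) (hI : I.Nonempty)
    (hIdef : ∀ i : Fin N, i ∈ I ↔ H ⟨t - 1, by omega⟩ i = true)
    (S : Matrix (Fin τ) (Fin N) ℤ)
    (hS : ∀ (r : Fin τ) (c : Fin N), S r c =
      if h : (r : ℕ) + 2 ≤ t then (if H ⟨t - (r : ℕ) - 2, by omega⟩ c = true then 1 else 0)
      else 0)
    (hpos : 0 < ∑ X ∈ Finset.univ.filter
        (fun X : Fin T → Fin N → Bool => ∀ u : Fin T, (u : ℕ) < t → X u = H u),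
        hawkesP N T lam ν X) :
    (∑ X ∈ Finset.univ.filter (fun X : Fin T → Fin N → Bool =>
        (∀ u : Fin T, (u : ℕ) < t → X u = H u) ∧
        (∀ u : Fin T, t ≤ (u : ℕ) → (u : ℕ) < t + ΔT - 1 → ∀ i, X u i = false) ∧
        (∃ i, X ⟨t + ΔT - 1, by omega⟩ i = true)), hawkesP N T lam ν X) /
      (∑ X ∈ Finset.univ.filter
        (fun X : Fin T → Fin N → Bool => ∀ u : Fin T, (u : ℕ) < t → X u = H u),
        hawkesP N T lam ν X) =
    (∏ i : Fin N, ∏ j ∈ Finset.Icc 1 (ΔT - 1),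
        (1 - sigm (stateIntensity τ N lam ν (eta τ N j S I) i))) *
      (1 - ∏ i : Fin N, (1 - sigm (stateIntensity τ N lam ν (eta τ N ΔT S I) i))) := by
  classical
  have tail : ∀ (m : ℕ), m ≤ T → ∀ Y : Fin T → Fin N → Bool,
      ∑ X ∈ Finset.univ.filter (fun X : Fin T → Fin N → Bool =>
        ∀ u : Fin T, (u : ℕ) < m → X u = Y u), hawkesP N T lam ν X
      = ∏ u ∈ Finset.univ.filter (fun u : Fin T => (u : ℕ) < m), fac N T lam ν Y u := by
    intro m hm Y
    have h := tail_sum N T lam ν (T - m) Y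
    rw [show T - (T - m) = m by omega] at h
    exact h
  set Z : Fin T → Fin N → Bool := fun u => if (u : ℕ) < t then H u else fun _ => false with hZ
  have harrlt : t + ΔT - 1 < T := by omega
  set arr : Fin T := ⟨t + ΔT - 1, harrlt⟩ with harr
  have harrval : (arr : ℕ) = t + ΔT - 1 := rfl
  set c : Fin N → ℝ := fun i => sigm (intensity N T lam ν arr Z i) with hc
  set D0 : ℝ := ∏ u ∈ Finset.univ.filter (fun u : Fin T => (u : ℕ) < t), fac N T lam ν H u
    with hD0
  set M0 : ℝ := ∏ u ∈ Finset.univ.filter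
      (fun u : Fin T => t ≤ (u : ℕ) ∧ (u : ℕ) < t + ΔT - 1), fac N T lam ν Z u with hM0
  have hden : ∑ X ∈ Finset.univ.filter
      (fun X : Fin T → Fin N → Bool => ∀ u : Fin T, (u : ℕ) < t → X u = H u),
      hawkesP N T lam ν X = D0 := tail t (by omega) H
  have hD0pos : 0 < D0 := by rw [← hden]; exact hpos
  -- numerator
  have hnum : (∑ X ∈ Finset.univ.filter (fun X : Fin T → Fin N → Bool =>
        (∀ u : Fin T, (u : ℕ) < t → X u = H u) ∧
        (∀ u : Fin T, t ≤ (u : ℕ) → (u : ℕ) < t + ΔT - 1 → ∀ i, X u i = false) ∧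
        (∃ i, X ⟨t + ΔT - 1, by omega⟩ i = true)), hawkesP N T lam ν X)
      = D0 * (M0 * (1 - ∏ i : Fin N, (1 - c i))) := by
    rw [← Finset.sum_fiberwise _ (fun X : Fin T → Fin N → Bool => X arr)
      (hawkesP N T lam ν)]
    have hfib : ∀ v : Fin N → Bool,
        (Finset.univ.filter (fun X : Fin T → Fin N → Bool =>
          (∀ u : Fin T, (u : ℕ) < t → X u = H u) ∧
          (∀ u : Fin T, t ≤ (u : ℕ) → (u : ℕ) < t + ΔT - 1 → ∀ i, X u i = false) ∧
          (∃ i, X ⟨t + ΔT - 1, by omega⟩ i = true))).filter (fun X => X arr = v)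
        = if (∃ i, v i = true) then
            Finset.univ.filter (fun X : Fin T → Fin N → Bool =>
              ∀ u : Fin T, (u : ℕ) < t + ΔT → X u = Function.update Z arr v u)
          else ∅ := by
      intro v
      by_cases hv : ∃ i, v i = true
      · rw [if_pos hv]
        ext X
        simp only [mem_filter, mem_univ, true_and]
        constructor
        · rintro ⟨⟨h1, h2, _⟩, h4⟩ u hu
          by_cases hut : (u : ℕ) < t
          · rw [Function.update_of_ne (by intro he; rw [he] at hut; omega), h1 u hut, hZ]
            simp only [if_pos hut]
          · by_cases hua : u = arr
            · rw [hua, Function.update_self, h4]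
            · have hu1 : t ≤ (u : ℕ) := by omega
              have hu2 : (u : ℕ) < t + ΔT - 1 := by
                have : (u : ℕ) ≠ t + ΔT - 1 := fun he => hua (Fin.ext (by omega))
                omega
              rw [Function.update_of_ne hua]
              funext i
              rw [h2 u hu1 hu2 i, hZ]
              simp only [if_neg hut]
        · intro hX
          have hXarr : X arr = v := by
            rw [hX arr (by omega), Function.update_self]
          refine ⟨⟨?_, ?_, ?_⟩, hXarr⟩
          · intro u hu
            rw [hX u (by omega), Function.update_of_ne (by intro he; rw [he] at hu; omega), hZ]
            simp only [if_pos hu]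
          · intro u hu1 hu2 i
            have hune : u ≠ arr := by intro he; rw [he] at hu2; omega
            rw [hX u (by omega), Function.update_of_ne hune, hZ]
            simp only [if_neg (by omega : ¬ (u : ℕ) < t)]
          · obtain ⟨i, hi⟩ := hv
            exact ⟨i, by rw [show (⟨t + ΔT - 1, by omega⟩ : Fin T) = arr from rfl, hXarr]; exact hi⟩
      · rw [if_neg hv]
        ext X
        simp only [mem_filter, mem_univ, true_and, Finset.notMem_empty, iff_false]
        rintro ⟨⟨_, _, ⟨i, hi⟩⟩, h4⟩
        exact hv ⟨i, by rw [← h4]; exact hi⟩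
    calc ∑ v : Fin N → Bool, ∑ X ∈ (Finset.univ.filter (fun X : Fin T → Fin N → Bool =>
          (∀ u : Fin T, (u : ℕ) < t → X u = H u) ∧
          (∀ u : Fin T, t ≤ (u : ℕ) → (u : ℕ) < t + ΔT - 1 → ∀ i, X u i = false) ∧
          (∃ i, X ⟨t + ΔT - 1, by omega⟩ i = true))).filter (fun X => X arr = v),
            hawkesP N T lam ν X
        = ∑ v : Fin N → Bool, (if (∃ i, v i = true) then
            (∏ i : Fin N, (if v i = true then c i else 1 - c i)) * (D0 * M0) else 0) := by
          refine Finset.sum_congr rfl fun v _ => ?_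
          rw [hfib v]
          by_cases hv : ∃ i, v i = true
          · rw [if_pos hv, if_pos hv, tail (t + ΔT) (by omega) (Function.update Z arr v)]
            -- split the product
            have hsplit : Finset.univ.filter (fun u : Fin T => (u : ℕ) < t + ΔT)
                = insert arr
                  ((Finset.univ.filter (fun u : Fin T => (u : ℕ) < t)) ∪
                   (Finset.univ.filter
                     (fun u : Fin T => t ≤ (u : ℕ) ∧ (u : ℕ) < t + ΔT - 1))) := by
              ext u
              simp only [mem_filter, mem_univ, true_and, mem_insert, mem_union]
              constructor
              · intro hu
                by_cases h1 : (u : ℕ) < t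
                · right; left; exact h1
                · by_cases h2 : (u : ℕ) < t + ΔT - 1
                  · right; right; exact ⟨by omega, h2⟩
                  · left; exact Fin.ext (by omega)
              · rintro (rfl | h1 | h2)
                · omega
                · omega
                · omega
            have harrnot : arr ∉
                (Finset.univ.filter (fun u : Fin T => (u : ℕ) < t)) ∪
                (Finset.univ.filter
                  (fun u : Fin T => t ≤ (u : ℕ) ∧ (u : ℕ) < t + ΔT - 1)) := by
              intro hmem
              simp only [mem_union, mem_filter, mem_univ, true_and] at hmem
              rcases hmem with h | h <;> omega
            have hdisj : Disjoint
                (Finset.univ.filter (fun u : Fin T => (u : ℕ) < t))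
                (Finset.univ.filter
                  (fun u : Fin T => t ≤ (u : ℕ) ∧ (u : ℕ) < t + ΔT - 1)) := by
              rw [Finset.disjoint_left]
              intro a ha hb
              simp only [mem_filter, mem_univ, true_and] at ha hb
              omega
            rw [hsplit, Finset.prod_insert harrnot, Finset.prod_union hdisj]
            have hWarr : fac N T lam ν (Function.update Z arr v) arr
                = ∏ i : Fin N, (if v i = true then c i else 1 - c i) := by
              unfold fac
              refine Finset.prod_congr rfl fun i _ => ?_
              rw [Function.update_self, hc]
              have : intensity N T lam ν arr (Function.update Z arr v) i
                  = intensity N T lam ν arr Z i := by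
                refine intensity_congr N T lam ν arr _ _ (fun t'' ht'' => ?_) i
                exact Function.update_of_ne (by intro he; rw [he] at ht''; exact absurd ht'' (lt_irrefl _)) _ _
              rw [this]
            have hWlow : ∀ u ∈ Finset.univ.filter (fun u : Fin T => (u : ℕ) < t),
                fac N T lam ν (Function.update Z arr v) u = fac N T lam ν H u := by
              intro u hu
              simp only [mem_filter, mem_univ, true_and] at hu
              refine fac_congr N T lam ν u _ _ fun t'' ht'' => ?_
              have ht2 : (t'' : ℕ) < t := by have := Fin.le_def.mp ht''; omega
              rw [Function.update_of_ne (by intro he; rw [he] at ht2; omega), hZ]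
              simp only [if_pos ht2]
            have hWmid : ∀ u ∈ Finset.univ.filter
                (fun u : Fin T => t ≤ (u : ℕ) ∧ (u : ℕ) < t + ΔT - 1),
                fac N T lam ν (Function.update Z arr v) u = fac N T lam ν Z u := by
              intro u hu
              simp only [mem_filter, mem_univ, true_and] at hu
              refine fac_congr N T lam ν u _ _ fun t'' ht'' => ?_
              have ht2 : (t'' : ℕ) < t + ΔT - 1 := by have := Fin.le_def.mp ht''; omega
              exact Function.update_of_ne (by intro he; rw [he] at ht2; omega) _ _
            rw [hWarr, Finset.prod_congr rfl hWlow, Finset.prod_congr rfl hWmid]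
          · rw [if_neg hv, if_neg hv, Finset.sum_empty]
      _ = (∑ v ∈ Finset.univ.filter (fun v : Fin N → Bool => ∃ i, v i = true),
            ∏ i : Fin N, (if v i = true then c i else 1 - c i)) * (D0 * M0) := by
          rw [Finset.sum_mul]
          rw [Finset.sum_filter]
      _ = D0 * (M0 * (1 - ∏ i : Fin N, (1 - c i))) := by
          have hall : ∑ v : Fin N → Bool,
              ∏ i : Fin N, (if v i = true then c i else 1 - c i) = 1 := by
            rw [sum_bool_prod N c (fun i => 1 - c i)]
            rw [Finset.prod_congr rfl (fun i _ => show c i + (1 - c i) = 1 by ring)]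
            exact Finset.prod_const_one
          have hnotp : Finset.univ.filter (fun v : Fin N → Bool => ¬ ∃ i, v i = true)
              = {fun _ => false} := by
            ext v
            simp only [mem_filter, mem_univ, true_and, mem_singleton]
            constructor
            · intro h
              funext i
              cases hvi : v i
              · rfl
              · exact absurd ⟨i, hvi⟩ h
            · rintro rfl
              rintro ⟨i, hi⟩
              simp at hi
          have hsplit2 := Finset.sum_filter_add_sum_filter_not Finset.univ
            (fun v : Fin N → Bool => ∃ i, v i = true)
            (fun v => ∏ i : Fin N, (if v i = true then c i else 1 - c i))
          rw [hall, hnotp, Finset.sum_singleton] at hsplit2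
          have hfalse : (∏ i : Fin N,
              (if (fun _ : Fin N => false) i = true then c i else 1 - c i))
              = ∏ i : Fin N, (1 - c i) := by
            refine Finset.prod_congr rfl fun i _ => ?_
            simp
          rw [hfalse] at hsplit2
          have : ∑ v ∈ Finset.univ.filter (fun v : Fin N → Bool => ∃ i, v i = true),
              ∏ i : Fin N, (if v i = true then c i else 1 - c i)
              = 1 - ∏ i : Fin N, (1 - c i) := by linarith
          rw [this]
          ring
  rw [hnum, hden, mul_div_cancel_left₀ _ (ne_of_gt hD0pos)]
  -- identify the two factors
  have key : ∀ (k : ℕ), 1 ≤ k → t + k ≤ T → ∀ (w : Fin T), (w : ℕ) = t + k - 1 →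
      ∀ i : Fin N,
      intensity N T lam ν w Z i = stateIntensity τ N lam ν (eta τ N k S I) i := by
    intro k hk1 hk2 w hw i
    have hwe : w = (⟨t + k - 1, by omega⟩ : Fin T) := Fin.ext hw
    rw [hwe, hZ]
    exact intensity_eq_state τ N T lam ν hν t k ht hk1 hk2 H I hIdef S hS i
  have hcEq : ∀ i, c i = sigm (stateIntensity τ N lam ν (eta τ N ΔT S I) i) := by
    intro i
    show sigm (intensity N T lam ν arr Z i) = _
    exact congrArg sigm (key ΔT hΔT htT arr harrval i)
  have hM0Eq : M0 = ∏ i : Fin N, ∏ j ∈ Finset.Icc 1 (ΔT - 1),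
      (1 - sigm (stateIntensity τ N lam ν (eta τ N j S I) i)) := by
    rw [hM0]
    have h1 : ∀ u ∈ Finset.univ.filter
        (fun u : Fin T => t ≤ (u : ℕ) ∧ (u : ℕ) < t + ΔT - 1),
        fac N T lam ν Z u = ∏ i : Fin N, (1 - sigm (intensity N T lam ν u Z i)) := by
      intro u hu
      simp only [mem_filter, mem_univ, true_and] at hu
      unfold fac
      refine Finset.prod_congr rfl fun i _ => ?_
      have hZu : Z u i = false := by
        rw [hZ]
        simp only [if_neg (by omega : ¬ (u : ℕ) < t)]
      rw [hZu]
      simp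
    rw [Finset.prod_congr rfl h1, Finset.prod_comm]
    refine Finset.prod_congr rfl fun i _ => ?_
    refine Finset.prod_bij' (fun u _ => (u : ℕ) - t + 1)
      (fun j hj => (⟨t + j - 1, by simp only [Finset.mem_Icc] at hj; omega⟩ : Fin T))
      ?_ ?_ ?_ ?_ ?_
    · intro u hu
      simp only [mem_filter, mem_univ, true_and] at hu
      simp only [Finset.mem_Icc]
      omega
    · intro j hj
      simp only [Finset.mem_Icc] at hj
      simp only [mem_filter, mem_univ, true_and, Fin.val_mk]
      omega
    · intro u hu
      simp only [mem_filter, mem_univ, true_and] at hu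
      exact Fin.ext (by simp only [Fin.val_mk]; omega)
    · intro j hj
      simp only [Finset.mem_Icc] at hj
      simp only [Fin.val_mk]
      omega
    · intro u hu
      simp only [mem_filter, mem_univ, true_and] at hu
      rw [key ((u : ℕ) - t + 1) (by omega) (by omega) u (by omega) i]
  have hprod : (∏ i : Fin N, (1 - c i))
      = ∏ i : Fin N, (1 - sigm (stateIntensity τ N lam ν (eta τ N ΔT S I) i)) :=
    Finset.prod_congr rfl (fun i _ => by rw [hcEq i])
  rw [hM0Eq, hprod]
end

section
/- Let A be a finite set with |A| = M ≥ 1 and p a probability mass function on A, and let p_{(1)} ≥ p_{(2)} ≥ … ≥ p_{(M)} be the values of p sorted in non-increasing order. Then for every injective map f from A into the set of nonempty finite binary strings, the expected codeword length satisfies Σ_{a∈A} p(a)·len(f(a)) ≥ Σ_{r=1}^{M} p_{(r)} · ⌈log₂(r/2 + 1)⌉. -/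
open Finset

/-- Encode a binary string as a natural number with a leading 1. -/
def encOTO : List Bool → ℕ
  | [] => 1
  | b :: t => 2 * encOTO t + (if b then 1 else 0)

lemma encOTO_ge (s : List Bool) : 2 ^ s.length ≤ encOTO s := by
  induction s with
  | nil => simp [encOTO]
  | cons b t ih => simp only [encOTO, List.length_cons, pow_succ]; cases b <;> simp <;> omega

lemma encOTO_lt (s : List Bool) : encOTO s < 2 ^ (s.length + 1) := by
  induction s with
  | nil => simp [encOTO]
  | cons b t ih =>
      simp only [encOTO, List.length_cons]
      have : 2 ^ (t.length + 1 + 1) = 2 * 2 ^ (t.length + 1) := by ring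
      cases b <;> simp <;> omega

lemma encOTO_inj : Function.Injective encOTO := by
  intro s
  induction s with
  | nil =>
      intro t h
      cases t with
      | nil => rfl
      | cons b u =>
          exfalso
          have h1 := encOTO_ge (b :: u)
          have h2 : (2:ℕ) ^ (b :: u).length ≥ 2 := by
            have : (1:ℕ) ≤ (b :: u).length := by simp
            calc (2:ℕ) ≤ 2 ^ 1 := by norm_num
              _ ≤ 2 ^ (b :: u).length := Nat.pow_le_pow_right (by norm_num) this
          have h' : (1:ℕ) = encOTO (b :: u) := h
          omega
  | cons b u ih =>
      intro t h
      cases t with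
      | nil =>
          exfalso
          have h1 := encOTO_ge (b :: u)
          have h2 : (2:ℕ) ^ (b :: u).length ≥ 2 := by
            have : (1:ℕ) ≤ (b :: u).length := by simp
            calc (2:ℕ) ≤ 2 ^ 1 := by norm_num
              _ ≤ 2 ^ (b :: u).length := Nat.pow_le_pow_right (by norm_num) this
          have h' : encOTO (b :: u) = 1 := h
          omega
      | cons c v =>
          simp only [encOTO] at h
          have hb : b = c := by cases b <;> cases c <;> simp_all <;> omega
          subst hb
          have : encOTO u = encOTO v := by cases b <;> simp at h <;> omega
          rw [ih this]

/-- optimal length of the (n+1)-st codeword -/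
def LnatOTO (n : ℕ) : ℕ := Nat.clog 2 (n + 3) - 1

lemma clog_ge (n : ℕ) : 2 ≤ Nat.clog 2 (n + 3) := by
  have := (Nat.lt_clog_iff_pow_lt (by norm_num : 1 < 2) (x := n + 3) (y := 1)).mpr (by omega)
  omega

lemma LnatOTO_le_iff (n ℓ : ℕ) : LnatOTO n ≤ ℓ ↔ n + 3 ≤ 2 ^ (ℓ + 1) := by
  have h := clog_ge n
  rw [← Nat.clog_le_iff_le_pow (by norm_num : 1 < 2)]
  unfold LnatOTO
  omega

lemma ceil_eq_LnatOTO (n : ℕ) :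
    ⌈Real.logb 2 ((n + 1 : ℝ) / 2 + 1)⌉ = (LnatOTO n : ℤ) := by
  have hx : ((n : ℝ) + 1) / 2 + 1 = ((n : ℝ) + 3) / 2 := by ring
  have hxpos : (0:ℝ) < ((n : ℝ) + 3) / 2 := by positivity
  have hb : (1:ℝ) < 2 := one_lt_two
  set k := LnatOTO n with hk
  have hk1 : 1 ≤ k := by
    have := clog_ge n; unfold k; unfold LnatOTO; omega
  apply le_antisymm
  · rw [Int.ceil_le, hx, Real.logb_le_iff_le_rpow hb hxpos]
    have h1 : n + 3 ≤ 2 ^ (k + 1) := (LnatOTO_le_iff n k).mp le_rfl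
    have h2 : ((2:ℝ) ^ ((k:ℤ) : ℝ)) = (2:ℝ) ^ k := by
      rw [show ((k:ℤ):ℝ) = (k:ℝ) by push_cast; ring, Real.rpow_natCast]
    rw [h2]
    have : ((n:ℝ) + 3) ≤ 2 * 2 ^ k := by
      have := (Nat.cast_le (α := ℝ)).mpr h1
      push_cast at this
      calc ((n:ℝ) + 3) ≤ 2 ^ (k+1) := this
        _ = 2 * 2 ^ k := by ring
    linarith
  · rw [show (k:ℤ) = (k - 1 : ℤ) + 1 by ring]
    rw [Int.add_one_le_iff, Int.lt_ceil, hx]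
    rw [Real.lt_logb_iff_rpow_lt hb hxpos]
    have h1 : 2 ^ k < n + 3 := by
      have : k < Nat.clog 2 (n + 3) := by
        have := clog_ge n; unfold k; unfold LnatOTO; omega
      exact (Nat.lt_clog_iff_pow_lt (by norm_num : 1 < 2)).mp this
    have h2 : ((2:ℝ) ^ (((k:ℤ) - 1 : ℤ) : ℝ)) = (2:ℝ) ^ k / 2 := by
      rw [show (((k:ℤ) - 1 : ℤ) : ℝ) = (k : ℝ) - 1 by push_cast; ring]
      rw [Real.rpow_sub (by norm_num), Real.rpow_one, Real.rpow_natCast]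
    rw [h2]
    have : (2:ℝ) ^ k < (n:ℝ) + 3 := by
      have := (Nat.cast_lt (α := ℝ)).mpr h1; push_cast at this; linarith
    linarith

lemma strictMono_le_apply {k M : ℕ} {F : Fin k → Fin M} (hF : StrictMono F) :
    ∀ n, ∀ i : Fin k, (i : ℕ) = n → n ≤ (F i : ℕ) := by
  intro n
  induction n with
  | zero => intro i _; exact Nat.zero_le _
  | succ m ih =>
      intro i hi
      have hm : m < k := by omega
      have hlt : (⟨m, hm⟩ : Fin k) < i := by
        rw [Fin.lt_def]; show m < (i : ℕ); omega
      have h1 : ((F ⟨m, hm⟩ : Fin M) : ℕ) < ((F i : Fin M) : ℕ) := hF hlt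
      have h2 := ih ⟨m, hm⟩ rfl
      omega

/-- Sum of `q` over any set of card `≤ N` is at most the sum over the first `N` indices,
for `q` non-increasing and non-negative. -/
lemma sorted_sum_le {M : ℕ} (q : Fin M → ℝ) (hq0 : ∀ r, 0 ≤ q r)
    (hmono : ∀ r r' : Fin M, r ≤ r' → q r' ≤ q r) (S : Finset (Fin M)) (N : ℕ)
    (hcard : S.card ≤ N) :
    ∑ r ∈ S, q r ≤ ∑ r ∈ univ.filter (fun r : Fin M => (r : ℕ) < N), q r := by
  classical
  set k := S.card with hk
  let F : Fin k → Fin M := ⇑(S.orderEmbOfFin hk.symm)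
  have hFmono : StrictMono F := (S.orderEmbOfFin hk.symm).strictMono
  have hself : ∀ i : Fin k, (i : ℕ) ≤ (F i : ℕ) := fun i =>
    strictMono_le_apply hFmono (i : ℕ) i rfl
  have himg : Finset.image F univ = S := by
    apply Finset.coe_inj.mp
    rw [Finset.coe_image, Finset.coe_univ, Set.image_univ]
    exact S.range_orderEmbOfFin hk.symm
  have hstep1 : ∑ r ∈ S, q r = ∑ i : Fin k, q (F i) := by
    rw [← himg, Finset.sum_image (fun i _ j _ h => hFmono.injective h)]
  have hstep2 : ∀ i : Fin k, q (F i) ≤ q ⟨(i : ℕ), lt_of_le_of_lt (hself i) (F i).isLt⟩ := by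
    intro i
    exact hmono _ _ (by simp [Fin.le_def, hself i])
  have hstep3 : ∑ i : Fin k, q ⟨(i:ℕ), lt_of_le_of_lt (hself i) (F i).isLt⟩
      ≤ ∑ r ∈ univ.filter (fun r : Fin M => (r : ℕ) < N), q r := by
    rw [show (∑ i : Fin k, q ⟨(i:ℕ), lt_of_le_of_lt (hself i) (F i).isLt⟩)
        = ∑ r ∈ univ.filter (fun r : Fin M => (r : ℕ) < k), q r from ?_]
    · apply Finset.sum_le_sum_of_subset_of_nonneg
      · intro r hr; simp only [mem_filter, mem_univ, true_and] at *; omega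
      · intro r _ _; exact hq0 r
    · refine Finset.sum_bij (fun i _ => ⟨(i:ℕ), lt_of_le_of_lt (hself i) (F i).isLt⟩) ?_ ?_ ?_ ?_
      · intro i _; simp [i.isLt]
      · intro i _ j _ h; simpa [Fin.ext_iff] using h
      · intro r hr
        simp only [mem_filter, mem_univ, true_and] at hr
        exact ⟨⟨(r:ℕ), hr⟩, mem_univ _, by simp [Fin.ext_iff]⟩
      · intro i _; rfl
  calc ∑ r ∈ S, q r = ∑ i : Fin k, q (F i) := hstep1
    _ ≤ ∑ i : Fin k, q ⟨(i:ℕ), lt_of_le_of_lt (hself i) (F i).isLt⟩ :=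
        Finset.sum_le_sum fun i _ => hstep2 i
    _ ≤ _ := hstep3

/-- **Converse for one-to-one (lossless) variable-length codes** (used in Theorem 2 of the
paper).  Let `A` be a finite set with `M ≥ 1` elements, `p` a pmf on `A`, and
`e : Fin M ≃ A` an enumeration of `A` in non-increasing order of probability, so that
`p (e r)` is the `(r+1)`-st largest value `p_{(r+1)}` of `p`.  Then every injective map `f`
from `A` into the nonempty finite binary strings satisfies
`Σ_a p(a)·len(f(a)) ≥ Σ_{r=1}^{M} p_{(r)} ⌈log₂(r/2 + 1)⌉`. -/
theorem stmt_12 {A : Type*} [Fintype A] [DecidableEq A] (M : ℕ) (hM : 1 ≤ M)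
    (hcard : Fintype.card A = M)
    (p : A → ℝ) (hp0 : ∀ a, 0 ≤ p a) (hp1 : ∑ a, p a = 1)
    (e : Fin M ≃ A) (hsort : ∀ r r' : Fin M, r ≤ r' → p (e r') ≤ p (e r))
    (f : A → List Bool) (hinj : Function.Injective f) (hne : ∀ a, f a ≠ []) :
    ∑ r : Fin M, p (e r) * (⌈Real.logb 2 (((r : ℕ) + 1 : ℝ) / 2 + 1)⌉ : ℝ) ≤
      ∑ a : A, p a * ((f a).length : ℝ) := by
  classical
  set q : Fin M → ℝ := fun r => p (e r) with hq
  have hq0 : ∀ r, 0 ≤ q r := fun r => hp0 _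
  set g : Fin M → ℕ := fun r => (f (e r)).length with hg
  have hg1 : ∀ r, 1 ≤ g r := fun r => List.length_pos_iff.mpr (hne (e r))
  -- counting bound
  have hcount : ∀ ℓ : ℕ, (univ.filter (fun r : Fin M => g r ≤ ℓ)).card ≤ 2 ^ (ℓ + 1) - 2 := by
    intro ℓ
    have := Finset.card_le_card_of_injOn (f := fun r : Fin M => encOTO (f (e r)))
      (s := univ.filter (fun r : Fin M => g r ≤ ℓ)) (t := Finset.Ico 2 (2 ^ (ℓ + 1)))
      (by
        intro r hr
        simp only [coe_filter, mem_filter, mem_univ, true_and, Set.mem_setOf_eq] at hr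
        simp only [coe_Ico, Set.mem_Ico]
        constructor
        · calc (2:ℕ) = 2 ^ 1 := by norm_num
            _ ≤ 2 ^ (f (e r)).length := Nat.pow_le_pow_right (by norm_num) (hg1 r)
            _ ≤ encOTO (f (e r)) := encOTO_ge _
        · calc encOTO (f (e r)) < 2 ^ ((f (e r)).length + 1) := encOTO_lt _
            _ ≤ 2 ^ (ℓ + 1) := Nat.pow_le_pow_right (by norm_num)
                (by have hr' : (f (e r)).length ≤ ℓ := hr; omega))
      (by
        intro r _ r' _ h
        exact e.injective (hinj (encOTO_inj h)))
    simpa [Nat.card_Ico] using this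
  -- per-level inequality
  have htotal : ∑ r : Fin M, q r = 1 := by
    rw [hq, ← hp1]; exact Fintype.sum_equiv e _ _ fun r => rfl
  have hlevel : ∀ ℓ : ℕ,
      ∑ r ∈ univ.filter (fun r : Fin M => ℓ < LnatOTO (r : ℕ)), q r ≤
      ∑ r ∈ univ.filter (fun r : Fin M => ℓ < g r), q r := by
    intro ℓ
    have h2 : 2 ≤ 2 ^ (ℓ + 1) := by
      calc (2:ℕ) = 2 ^ 1 := by norm_num
        _ ≤ 2 ^ (ℓ + 1) := Nat.pow_le_pow_right (by norm_num) (by omega)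
    have hcompl : ∑ r ∈ univ.filter (fun r : Fin M => g r ≤ ℓ), q r ≤
        ∑ r ∈ univ.filter (fun r : Fin M => LnatOTO (r : ℕ) ≤ ℓ), q r := by
      have heq : (univ.filter (fun r : Fin M => LnatOTO (r : ℕ) ≤ ℓ)) =
          univ.filter (fun r : Fin M => (r : ℕ) < 2 ^ (ℓ + 1) - 2) := by
        ext r
        simp only [mem_filter, mem_univ, true_and, LnatOTO_le_iff]
        omega
      rw [heq]
      exact sorted_sum_le q hq0 (fun r r' h => hsort r r' h) _ _ (hcount ℓ)
    have e1 := Finset.sum_filter_add_sum_filter_not univ (fun r : Fin M => ℓ < g r) q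
    have e2 := Finset.sum_filter_add_sum_filter_not univ (fun r : Fin M => ℓ < LnatOTO (r : ℕ)) q
    have hn1 : (univ.filter (fun r : Fin M => ¬ ℓ < g r)) =
        univ.filter (fun r : Fin M => g r ≤ ℓ) := by simp [not_lt]
    have hn2 : (univ.filter (fun r : Fin M => ¬ ℓ < LnatOTO (r : ℕ))) =
        univ.filter (fun r : Fin M => LnatOTO (r : ℕ) ≤ ℓ) := by simp [not_lt]
    rw [hn1] at e1; rw [hn2] at e2
    rw [htotal] at e1 e2
    linarith
  -- layer cake
  set K : ℕ := (univ.sup g) + (univ.sup fun r : Fin M => LnatOTO (r : ℕ)) with hK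
  have hgK : ∀ r : Fin M, g r ≤ K := fun r =>
    le_trans (Finset.le_sup (mem_univ r)) (by omega)
  have hLK : ∀ r : Fin M, LnatOTO (r : ℕ) ≤ K := fun r =>
    le_trans (Finset.le_sup (f := fun r : Fin M => LnatOTO (r : ℕ)) (mem_univ r)) (by omega)
  have layer : ∀ h : Fin M → ℕ, (∀ r, h r ≤ K) →
      ∑ r : Fin M, q r * (h r : ℝ) =
      ∑ ℓ ∈ Finset.range K, ∑ r ∈ univ.filter (fun r : Fin M => ℓ < h r), q r := by
    intro h hh
    have hcast : ∀ r : Fin M, (h r : ℝ) = ∑ ℓ ∈ Finset.range K, if ℓ < h r then (1:ℝ) else 0 := by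
      intro r
      rw [Finset.sum_boole]
      congr 1
      rw [show (Finset.range K).filter (fun ℓ => ℓ < h r) = Finset.range (h r) from ?_]
      · simp
      · ext ℓ; simp only [Finset.mem_filter, Finset.mem_range]
        have := hh r; omega
    calc ∑ r : Fin M, q r * (h r : ℝ)
        = ∑ r : Fin M, ∑ ℓ ∈ Finset.range K, (if ℓ < h r then q r else 0) := by
          refine Finset.sum_congr rfl fun r _ => ?_
          rw [hcast r, Finset.mul_sum]
          refine Finset.sum_congr rfl fun ℓ _ => ?_
          split <;> simp
      _ = ∑ ℓ ∈ Finset.range K, ∑ r : Fin M, (if ℓ < h r then q r else 0) := Finset.sum_comm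
      _ = ∑ ℓ ∈ Finset.range K, ∑ r ∈ univ.filter (fun r : Fin M => ℓ < h r), q r := by
          refine Finset.sum_congr rfl fun ℓ _ => ?_
          rw [Finset.sum_filter]
  -- put it together
  have hrhs : ∑ a : A, p a * ((f a).length : ℝ) = ∑ r : Fin M, q r * (g r : ℝ) :=
    (Fintype.sum_equiv e _ _ fun r => rfl).symm
  have hlhs : ∑ r : Fin M, p (e r) * (⌈Real.logb 2 (((r : ℕ) + 1 : ℝ) / 2 + 1)⌉ : ℝ)
      = ∑ r : Fin M, q r * ((LnatOTO (r : ℕ) : ℕ) : ℝ) := by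
    refine Finset.sum_congr rfl fun r _ => ?_
    rw [ceil_eq_LnatOTO (r : ℕ)]
    push_cast
    ring
  rw [hrhs, hlhs, layer g hgK, layer (fun r => LnatOTO (r : ℕ)) hLK]
  exact Finset.sum_le_sum fun ℓ _ => hlevel ℓ
end

section
/- Let A be a finite set with |A| = M ≥ 1 and p a probability mass function on A. Then there exists an injective map f from A into the set of nonempty finite binary strings and a bijection r : A → {1,…,M} with p(a) non-increasing in r(a), such that len(f(a)) = ⌈log₂(r(a)/2 + 1)⌉ for every a ∈ A; consequently Σ_{a∈A} p(a)·len(f(a)) = Σ_{r=1}^{M} p_{(r)} · ⌈log₂(r/2 + 1)⌉, where p_{(1)} ≥ … ≥ p_{(M)} are the values of p sorted in non-increasing order. -/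
open Finset

/-- Encode the `n`-th (0-based) message as the binary digits of `n+2` below the leading bit. -/
private def enc (n : ℕ) : List Bool := (List.range (Nat.log 2 (n + 2))).map (n + 2).testBit

private lemma enc_length (n : ℕ) : (enc n).length = Nat.log 2 (n + 2) := by
  simp [enc]

private lemma log_pos (n : ℕ) : 1 ≤ Nat.log 2 (n + 2) :=
  Nat.le_log_of_pow_le one_lt_two (by omega)

private lemma pow_log_le (n : ℕ) : 2 ^ Nat.log 2 (n + 2) ≤ n + 2 :=
  Nat.pow_log_le_self 2 (by omega)

private lemma lt_pow_succ_log (n : ℕ) : n + 2 < 2 ^ (Nat.log 2 (n + 2) + 1) :=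
  Nat.lt_pow_succ_log_self one_lt_two _

private lemma testBit_log (m : ℕ) (hm : 2 ≤ m) : m.testBit (Nat.log 2 m) = true := by
  have h1 : 2 ^ Nat.log 2 m ≤ m := Nat.pow_log_le_self 2 (by omega)
  have h2 : m < 2 ^ (Nat.log 2 m + 1) := Nat.lt_pow_succ_log_self one_lt_two m
  have hdiv : m / 2 ^ Nat.log 2 m = 1 := by
    apply Nat.div_eq_of_lt_le (by simpa using h1)
    simpa [two_mul, pow_succ, mul_comm] using h2
  simp [Nat.testBit_eq_decide_div_mod_eq, hdiv]

private lemma enc_injective : Function.Injective enc := by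
  intro a b hab
  have hlen : Nat.log 2 (a + 2) = Nat.log 2 (b + 2) := by
    have := congrArg List.length hab
    simpa [enc_length] using this
  set ℓ := Nat.log 2 (a + 2) with hℓ
  have hbit : ∀ i, i < ℓ → (a + 2).testBit i = (b + 2).testBit i := by
    intro i hi
    have := congrArg (fun L => L.getD i false) hab
    simpa [enc, ← hlen, hi, List.getElem?_range, (show i < Nat.log 2 (a + 2) from hi)] using this
  have : a + 2 = b + 2 := by
    apply Nat.eq_of_testBit_eq
    intro i
    rcases lt_trichotomy i ℓ with h | h | h
    · exact hbit i h
    · subst h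
      rw [testBit_log _ (by omega), hlen, testBit_log _ (by omega)]
    · have ha : (a + 2).testBit i = false :=
        Nat.testBit_eq_false_of_lt
          (lt_of_lt_of_le (lt_pow_succ_log a) (Nat.pow_le_pow_right (by norm_num) (by omega)))
      have hb : (b + 2).testBit i = false :=
        Nat.testBit_eq_false_of_lt
          (lt_of_lt_of_le (lt_pow_succ_log b)
            (Nat.pow_le_pow_right (by norm_num) (by rw [← hlen]; omega)))
      rw [ha, hb]
  omega

private lemma ceil_eq (n : ℕ) :
    ⌈Real.logb 2 (((n + 1 : ℕ) : ℝ) / 2 + 1)⌉ = (Nat.log 2 (n + 2) : ℤ) := by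
  set ℓ := Nat.log 2 (n + 2) with hℓ
  have h1 : 2 ^ ℓ ≤ n + 2 := pow_log_le n
  have h2 : n + 2 < 2 ^ (ℓ + 1) := lt_pow_succ_log n
  have hx : (0 : ℝ) < ((n + 1 : ℕ) : ℝ) / 2 + 1 := by positivity
  rw [Int.ceil_eq_iff]
  constructor
  · rw [show ((ℓ : ℤ) : ℝ) - 1 = (ℓ : ℝ) - 1 by push_cast; ring]
    rw [Real.lt_logb_iff_rpow_lt one_lt_two hx]
    have : (2 : ℝ) ^ ((ℓ : ℝ) - 1) = (2 : ℝ) ^ ℓ / 2 := by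
      rw [Real.rpow_sub two_pos, Real.rpow_natCast, Real.rpow_one]
    rw [this]
    have h1' : (2 : ℝ) ^ ℓ ≤ (n : ℝ) + 2 := by exact_mod_cast h1
    push_cast
    nlinarith
  · rw [show ((ℓ : ℤ) : ℝ) = (ℓ : ℝ) by push_cast; ring]
    rw [Real.logb_le_iff_le_rpow one_lt_two hx, Real.rpow_natCast]
    have : ((n : ℝ) + 2) + 1 ≤ (2 : ℝ) ^ (ℓ + 1) := by
      have : (n + 2 + 1 : ℕ) ≤ 2 ^ (ℓ + 1) := by omega
      exact_mod_cast this
    rw [pow_succ] at this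
    push_cast
    nlinarith

/-- **Achievability for one-to-one (lossless) variable-length codes** (used in Theorem 2 of
the paper).  Let `A` be a finite set with `M ≥ 1` elements and `p` a pmf on `A`.  There is
an injective map `f` from `A` into the nonempty finite binary strings and a ranking
bijection `r : A ≃ Fin M` with `p` non-increasing in the rank, such that the codeword of
the message of rank `r` has length `⌈log₂(r/2 + 1)⌉` (ranks being `(r a : ℕ) + 1 ∈ {1,…,M}`);
consequently the expected length equals `Σ_{r=1}^{M} p_{(r)} ⌈log₂(r/2 + 1)⌉`, where
`p_{(r)} = p (r.symm (r−1))` are the values of `p` in non-increasing order. -/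
theorem stmt_13 {A : Type*} [Fintype A] [DecidableEq A] (M : ℕ) (hM : 1 ≤ M)
    (hcard : Fintype.card A = M)
    (p : A → ℝ) (hp0 : ∀ a, 0 ≤ p a) (hp1 : ∑ a, p a = 1) :
    ∃ (f : A → List Bool) (r : A ≃ Fin M),
      Function.Injective f ∧ (∀ a, f a ≠ []) ∧
      (∀ a b : A, r a ≤ r b → p b ≤ p a) ∧
      (∀ a : A, ((f a).length : ℤ) = ⌈Real.logb 2 ((((r a : ℕ) + 1 : ℕ) : ℝ) / 2 + 1)⌉) ∧
      ∑ a : A, p a * ((f a).length : ℝ) =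
        ∑ k : Fin M, p (r.symm k) * (⌈Real.logb 2 (((k : ℕ) + 1 : ℝ) / 2 + 1)⌉ : ℝ) := by
  classical
  let e0 : A ≃ Fin M := Fintype.equivFinOfCardEq hcard
  let g : Fin M → ℝ := fun i => -p (e0.symm i)
  let σ : Equiv.Perm (Fin M) := Tuple.sort g
  let r : A ≃ Fin M := e0.trans σ.symm
  have hmono : Monotone (g ∘ σ) := Tuple.monotone_sort g
  have hkey : ∀ a : A, (g ∘ σ) (r a) = -p a := by
    intro a
    simp [g, r, σ, Function.comp]
  have hanti : ∀ a b : A, r a ≤ r b → p b ≤ p a := by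
    intro a b h
    have := hmono h
    rw [hkey a, hkey b] at this
    linarith
  have hsymm : ∀ k : Fin M, r (r.symm k) = k := fun k => r.apply_symm_apply k
  refine ⟨fun a => enc (r a), r, ?_, ?_, hanti, ?_, ?_⟩
  · intro a b hab
    have := enc_injective hab
    exact r.injective (Fin.val_injective this)
  · intro a h
    have h' : enc ((r a : ℕ)) = [] := h
    have h1 := enc_length ((r a : ℕ))
    rw [h'] at h1
    have := log_pos ((r a : ℕ))
    simp at h1
    omega
  · intro a
    rw [enc_length, ceil_eq]
  · rw [← Equiv.sum_comp r.symm (fun a => p a * ((enc (r a)).length : ℝ))]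
    refine Finset.sum_congr rfl fun k _ => ?_
    rw [hsymm k]
    congr 1
    rw [enc_length]
    have := ceil_eq (k : ℕ)
    push_cast at this ⊢
    rw [this]
    norm_cast
end

section
/- Let 𝒮 be a finite set equipped with a probability vector π, and let 𝒜 be a finite nonempty set of messages with |𝒜| = M. For each S ∈ 𝒮, let p_S be a probability mass function on 𝒜 and let r_S : 𝒜 → {1,…,M} be a bijection such that p_S(a) is non-increasing in r_S(a). Then the minimum, over all families (f_S)_{S∈𝒮} of injective maps f_S from 𝒜 into the set of nonempty finite binary strings, of the stationary average expected codeword length Σ_{S∈𝒮} π(S) Σ_{a∈𝒜} p_S(a)·len(f_S(a)) equals Σ_{S∈𝒮} π(S) Σ_{a∈𝒜} p_S(a) · ⌈log₂(r_S(a)/2 + 1)⌉. -/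
open Finset

/-- Value of a binary string with an implicit leading 1 bit (little-endian). -/
def valB : List Bool → ℕ
  | [] => 1
  | b :: l => 2 * valB l + cond b 1 0

/-- The `n`-th nonempty binary string (for `n ≥ 2`): binary digits of `n` minus leading bit. -/
def code : ℕ → List Bool
  | 0 => []
  | 1 => []
  | (n+2) => ((n+2) % 2 == 1) :: code ((n+2)/2)
  decreasing_by omega

lemma valB_bounds (l : List Bool) : 2 ^ l.length ≤ valB l ∧ valB l < 2 ^ (l.length + 1) := by
  induction l with
  | nil => simp [valB]
  | cons b l ih =>
    rcases ih with ⟨h1, h2⟩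
    cases b <;> simp [valB, pow_succ] at * <;> omega

lemma valB_injective : Function.Injective valB := by
  intro l1
  induction l1 with
  | nil =>
    intro l2 h
    cases l2 with
    | nil => rfl
    | cons b l =>
      have := (valB_bounds (b :: l)).1
      simp [valB] at h
      have : 2 ^ (b :: l).length ≤ 1 := h ▸ this
      simp [pow_succ] at this
      have := Nat.one_le_two_pow (n := l.length)
      omega
  | cons b l ih =>
    intro l2 h
    cases l2 with
    | nil =>
      have := (valB_bounds (b :: l)).1
      simp [valB] at h
      have : 2 ^ (b :: l).length ≤ 1 := h ▸ this
      simp [pow_succ] at this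
      have := Nat.one_le_two_pow (n := l.length)
      omega
    | cons c l2 =>
      simp only [valB] at h
      have hb : b = c ∧ valB l = valB l2 := by
        cases b <;> cases c <;> simp at h ⊢ <;> omega
      rw [hb.1, ih hb.2]

lemma valB_code : ∀ n, 1 ≤ n → valB (code n) = n := by
  intro n
  induction n using Nat.strong_induction_on with
  | _ n ih =>
    intro hn
    match n, hn with
    | 1, _ => simp [code, valB]
    | (m+2), _ =>
      rw [code, valB]
      have h2 : valB (code ((m+2)/2)) = (m+2)/2 := ih ((m+2)/2) (by omega) (by omega)
      rw [h2]
      rcases Nat.even_or_odd (m+2) with h | h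
      · have : (m+2) % 2 = 0 := Nat.even_iff.mp h
        simp [this]
        omega
      · have : (m+2) % 2 = 1 := Nat.odd_iff.mp h
        simp [this]
        omega

lemma code_length : ∀ n, 1 ≤ n → (code n).length = Nat.log 2 n := by
  intro n
  induction n using Nat.strong_induction_on with
  | _ n ih =>
    intro hn
    match n, hn with
    | 1, _ => simp [code]
    | (m+2), _ =>
      rw [code]
      have h2 : (code ((m+2)/2)).length = Nat.log 2 ((m+2)/2) := ih ((m+2)/2) (by omega) (by omega)
      have h3 : Nat.log 2 ((m+2)/2) = Nat.log 2 (m+2) - 1 := Nat.log_div_base 2 (m+2)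
      have h4 : 0 < Nat.log 2 (m+2) := Nat.log_pos (by norm_num) (by omega)
      simp only [List.length_cons, h2, h3]
      omega

lemma code_ne_nil (n : ℕ) (hn : 2 ≤ n) : code n ≠ [] := by
  intro h
  have := valB_code n (by omega)
  rw [h] at this
  simp [valB] at this
  omega

/-- Counting nonempty binary strings of bounded length. -/
lemma card_le_of_lengths (F : Finset (List Bool)) (t : ℕ)
    (h : ∀ l ∈ F, l ≠ [] ∧ l.length ≤ t) : F.card + 2 ≤ 2 ^ (t + 1) := by
  have hinj : (F.image valB).card = F.card := Finset.card_image_of_injective F valB_injective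
  have hsub : F.image valB ⊆ Finset.Ico 2 (2 ^ (t + 1)) := by
    intro v hv
    simp only [Finset.mem_image] at hv
    obtain ⟨l, hl, rfl⟩ := hv
    obtain ⟨hne, hlen⟩ := h l hl
    obtain ⟨hb1, hb2⟩ := valB_bounds l
    have hlen1 : 1 ≤ l.length := List.length_pos_iff.mpr hne
    have : 2 ≤ 2 ^ l.length := by
      calc 2 = 2 ^ 1 := rfl
      _ ≤ 2 ^ l.length := Nat.pow_le_pow_right (by norm_num) hlen1
    have : 2 ^ (l.length + 1) ≤ 2 ^ (t + 1) := Nat.pow_le_pow_right (by norm_num) (by omega)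
    simp only [Finset.mem_Ico]
    omega
  have := Finset.card_le_card hsub
  rw [hinj, Nat.card_Ico] at this
  have h4 : 2 ^ 1 ≤ 2 ^ (t+1) := Nat.pow_le_pow_right (by norm_num) (by omega)
  simp at h4
  omega

/-- ceiling formula equals `Nat.log`. -/
lemma ceil_logb_eq (k : ℕ) :
    (⌈Real.logb 2 ((k + 1 : ℝ) / 2 + 1)⌉ : ℝ) = (Nat.log 2 (k + 2) : ℝ) := by
  set L := Nat.log 2 (k + 2) with hL
  have h1 : (2:ℕ) ^ L ≤ k + 2 := Nat.pow_log_le_self 2 (by omega)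
  have h2 : k + 2 < 2 ^ (L + 1) := Nat.lt_pow_succ_log_self (by norm_num) _
  have harg : ((k : ℝ) + 1) / 2 + 1 = ((k : ℝ) + 3) / 2 := by ring
  have hb : (1:ℝ) < 2 := one_lt_two
  have hpos : (0:ℝ) < (k : ℝ) + 3 := by positivity
  have hlogdiv : Real.logb 2 (((k:ℝ) + 3) / 2) = Real.logb 2 ((k:ℝ) + 3) - 1 := by
    rw [Real.logb_div (by positivity) (by norm_num), Real.logb_self_eq_one (b := 2) (by norm_num)]
  have hpow : ∀ n : ℕ, Real.logb 2 ((2:ℝ) ^ n) = (n : ℝ) := by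
    intro n
    rw [Real.logb_pow, Real.logb_self_eq_one (b := 2) (by norm_num), mul_one]
  have hlow : (L : ℝ) < Real.logb 2 ((k:ℝ) + 3) := by
    have hlt : ((2:ℝ) ^ L) < (k:ℝ) + 3 := by
      have : ((2:ℕ) ^ L : ℝ) ≤ (k : ℝ) + 2 := by exact_mod_cast h1
      push_cast at this ⊢
      linarith
    calc (L : ℝ) = Real.logb 2 ((2:ℝ) ^ L) := (hpow L).symm
    _ < Real.logb 2 ((k:ℝ) + 3) := Real.logb_lt_logb hb (by positivity) hlt
  have hhigh : Real.logb 2 ((k:ℝ) + 3) ≤ (L : ℝ) + 1 := by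
    have hle : (k:ℝ) + 3 ≤ (2:ℝ) ^ (L + 1) := by
      have : ((k:ℕ) + 3 : ℝ) ≤ ((2:ℕ) ^ (L+1) : ℝ) := by exact_mod_cast h2
      push_cast at this ⊢
      linarith
    calc Real.logb 2 ((k:ℝ) + 3) ≤ Real.logb 2 ((2:ℝ) ^ (L + 1)) :=
      Real.logb_le_logb_of_le hb hpos hle
    _ = (L : ℝ) + 1 := by rw [hpow (L+1)]; push_cast; ring
  have : ⌈Real.logb 2 ((k + 1 : ℝ) / 2 + 1)⌉ = (L : ℤ) := by
    rw [harg, hlogdiv]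
    rw [Int.ceil_eq_iff]
    constructor
    · push_cast; linarith
    · push_cast; linarith
  rw [this]
  simp

/-- Key per-state lower bound. -/
lemma key_bound {M : ℕ} (q : Fin M → ℝ) (hq0 : ∀ i, 0 ≤ q i) (hqa : Antitone q)
    (g : Fin M → List Bool) (hg : Function.Injective g) (hne : ∀ i, g i ≠ []) :
    ∑ i, q i * (Nat.log 2 ((i : ℕ) + 2) : ℝ) ≤ ∑ i, q i * ((g i).length : ℝ) := by
  set x : Fin M → ℕ := fun i => (g i).length with hx
  set σ := Tuple.sort x with hσ
  have hmono : Monotone (x ∘ σ) := Tuple.monotone_sort x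
  -- pointwise bound on sorted lengths
  have hpt : ∀ k : Fin M, Nat.log 2 ((k : ℕ) + 2) ≤ x (σ k) := by
    intro k
    set F := Finset.image (fun i => g (σ i)) (Finset.Iic k) with hF
    have hcardF : F.card = (k : ℕ) + 1 := by
      rw [hF, Finset.card_image_of_injective _ (fun i j h => σ.injective (hg h)), Fin.card_Iic]
    have hprop : ∀ l ∈ F, l ≠ [] ∧ l.length ≤ x (σ k) := by
      intro l hl
      simp only [hF, Finset.mem_image] at hl
      obtain ⟨i, hi, rfl⟩ := hl
      refine ⟨hne _, ?_⟩
      exact hmono (Finset.mem_Iic.mp hi)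
    have := card_le_of_lengths F (x (σ k)) hprop
    rw [hcardF] at this
    have : (k : ℕ) + 2 < 2 ^ (x (σ k) + 1) := by omega
    have := Nat.log_lt_of_lt_pow (by omega : (k:ℕ) + 2 ≠ 0) this
    omega
  -- Antivary
  set y : Fin M → ℝ := fun i => (x (σ i) : ℝ) with hy
  have hymono : Monotone y := by
    intro i j hij
    have := hmono hij
    simp only [hy]
    exact_mod_cast this
  have hav : Antivary q y := by
    intro i j hij
    have : i ≤ j := by
      by_contra hc
      push_neg at hc
      exact absurd (hymono hc.le) (not_le.mpr hij)
    exact hqa this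
  calc ∑ i, q i * (Nat.log 2 ((i : ℕ) + 2) : ℝ)
      ≤ ∑ i, q i * y i := by
        apply Finset.sum_le_sum
        intro i _
        apply mul_le_mul_of_nonneg_left _ (hq0 i)
        simp only [hy]
        exact_mod_cast hpt i
    _ ≤ ∑ i, q (σ i) * y i := hav.sum_mul_le_sum_comp_perm_mul (σ := σ)
    _ = ∑ i, q i * ((g i).length : ℝ) := by
        rw [← Equiv.sum_comp σ (fun j => q j * ((g j).length : ℝ))]

/-- **Optimal state-dependent one-to-one compression (Theorem 2 of the paper).**  Let `𝒮`
be a finite set with probability vector `π` and `A` a finite nonempty message set with `M`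
elements.  For each `S ∈ 𝒮` let `p S` be a pmf on `A` and `r S : A ≃ Fin M` a ranking with
`p S` non-increasing in the rank.  Then the minimum, over all families `(f S)` of injective
maps from `A` into the nonempty finite binary strings, of the stationary average expected
codeword length `Σ_S π(S) Σ_a p_S(a) len(f_S(a))` is attained and equals
`Σ_S π(S) Σ_a p_S(a) ⌈log₂((rank of a under r S)/2 + 1)⌉` (ranks being `(r S a : ℕ) + 1`). -/
theorem stmt_14 {𝒮 A : Type*} [Fintype 𝒮] [Fintype A] [Nonempty A] [DecidableEq A]
    (M : ℕ) (hM : 1 ≤ M) (hcard : Fintype.card A = M)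
    (π : 𝒮 → ℝ) (hπ0 : ∀ s, 0 ≤ π s) (hπ1 : ∑ s, π s = 1)
    (p : 𝒮 → A → ℝ) (hp0 : ∀ s a, 0 ≤ p s a) (hp1 : ∀ s, ∑ a, p s a = 1)
    (r : (s : 𝒮) → A ≃ Fin M)
    (hsort : ∀ (s : 𝒮) (a b : A), r s a ≤ r s b → p s b ≤ p s a) :
    IsLeast
      {x : ℝ | ∃ f : 𝒮 → A → List Bool,
        (∀ s, Function.Injective (f s)) ∧ (∀ s a, f s a ≠ []) ∧
        x = ∑ s, π s * ∑ a, p s a * ((f s a).length : ℝ)}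
      (∑ s, π s * ∑ a, p s a * (⌈Real.logb 2 (((r s a : ℕ) + 1 : ℝ) / 2 + 1)⌉ : ℝ)) := by

  have hceil : ∀ (s : 𝒮) (a : A),
      (⌈Real.logb 2 (((r s a : ℕ) + 1 : ℝ) / 2 + 1)⌉ : ℝ)
        = (Nat.log 2 ((r s a : ℕ) + 2) : ℝ) := by
    intro s a
    have := ceil_logb_eq (r s a : ℕ)
    push_cast at this ⊢
    exact this
  constructor
  · -- membership: the optimal code
    refine ⟨fun s a => code ((r s a : ℕ) + 2), ?_, ?_, ?_⟩
    · intro s a b h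
      simp only at h
      have h1 := valB_code ((r s a : ℕ) + 2) (by omega)
      have h2 := valB_code ((r s b : ℕ) + 2) (by omega)
      rw [h] at h1
      have : (r s a : ℕ) = (r s b : ℕ) := by omega
      exact (r s).injective (Fin.ext this)
    · intro s a
      exact code_ne_nil _ (by omega)
    · refine Finset.sum_congr rfl fun s _ => ?_
      congr 1
      refine Finset.sum_congr rfl fun a _ => ?_
      rw [hceil s a, code_length _ (by omega)]
  · -- lower bound
    rintro x ⟨f, hinj, hne, rfl⟩
    apply Finset.sum_le_sum
    intro s _
    apply mul_le_mul_of_nonneg_left _ (hπ0 s)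
    set q : Fin M → ℝ := fun i => p s ((r s).symm i) with hq
    set g : Fin M → List Bool := fun i => f s ((r s).symm i) with hg
    have hkey := key_bound q (fun i => hp0 s _)
      (fun i j hij => hsort s ((r s).symm i) ((r s).symm j) (by simpa using hij))
      g ((hinj s).comp (r s).symm.injective) (fun i => hne s _)
    calc ∑ a, p s a * (⌈Real.logb 2 (((r s a : ℕ) + 1 : ℝ) / 2 + 1)⌉ : ℝ)
        = ∑ a, p s a * (Nat.log 2 ((r s a : ℕ) + 2) : ℝ) := by
          exact Finset.sum_congr rfl fun a _ => by rw [hceil s a]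
      _ = ∑ i, q i * (Nat.log 2 ((i : ℕ) + 2) : ℝ) := by
          rw [← Equiv.sum_comp (r s) (fun i => q i * (Nat.log 2 ((i : ℕ) + 2) : ℝ))]
          exact Finset.sum_congr rfl fun a _ => by simp [hq]
      _ ≤ ∑ i, q i * ((g i).length : ℝ) := hkey
      _ = ∑ a, p s a * ((f s a).length : ℝ) := by
          rw [← Equiv.sum_comp (r s) (fun i => q i * ((g i).length : ℝ))]
          exact Finset.sum_congr rfl fun a _ => by simp [hq, hg]
end
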